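/- arXiv:2307.13730 — 4 statements merged into one kernel-verified Lean document; each statement's English description precedes it below -/
import Mathlib

section
/- Let G be a connected graph on n vertices with girth at least c·log n (for some constant c > 0) whose cycle space is nontrivial, and let B be any cycle basis of G. If G has bounded degree, then the total length of the cycles in B is Ω(n log n), and consequently some edge of G belongs to Ω(log n) cycles of B. -/
/-- `x : Sym2 V → ZMod 2` is the edge-indicator vector of a cycle of `G`. -/
def IsCycleVec {V : Type*} [DecidableEq V] (G : SimpleGraph V) (x : Sym2 V → ZMod 2) : Prop :=
  ∃ (v : V) (w : G.Walk v v), w.IsCycle ∧ ∀ e, x e = if e ∈ w.edges then 1 else 0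

/-- The cycle space of `G` over GF(2): the span of the indicator vectors of cycles. -/
noncomputable def cycleSpace {V : Type*} [DecidableEq V] (G : SimpleGraph V) :
    Submodule (ZMod 2) (Sym2 V → ZMod 2) :=
  Submodule.span (ZMod 2) {x | IsCycleVec G x}

/-- The length (number of edges) of a cycle vector. -/
noncomputable def cycVecLen {n : ℕ} (x : Sym2 (Fin n) → ZMod 2) : ℕ :=
  (Finset.univ.filter fun e : Sym2 (Fin n) => x e = 1).card

/-- Let `G` be a connected bounded-degree graph on `n` vertices with girth
at least `c·log n` and nontrivial cycle space of dimension `Ω(n)` (as for bounded-degree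
expanders, cf. the context: the cycle basis has `Θ(n)` elements). Then the total length of
the cycles of any cycle basis `B` is `Ω(n log n)`, and consequently some edge of `G`
belongs to `Ω(log n)` cycles of `B`. -/
theorem long_girth_cycle_basis_lower_bound (d : ℕ) (c c₀ : ℝ) (hc : 0 < c) (hc₀ : 0 < c₀) :
    ∃ c₁ c₂ : ℝ, 0 < c₁ ∧ 0 < c₂ ∧ ∃ N₀ : ℕ, ∀ n : ℕ, N₀ ≤ n →
      ∀ G : SimpleGraph (Fin n), G.Connected →
      (∀ v, (G.neighborSet v).ncard ≤ d) →
      (∀ (v : Fin n) (w : G.Walk v v), w.IsCycle → c * Real.log n ≤ w.length) →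
      cycleSpace G ≠ ⊥ →
      ∀ B : Finset (Sym2 (Fin n) → ZMod 2),
        (∀ x ∈ B, IsCycleVec G x) →
        LinearIndependent (ZMod 2) ((↑) : B → (Sym2 (Fin n) → ZMod 2)) →
        Submodule.span (ZMod 2) (B : Set (Sym2 (Fin n) → ZMod 2)) = cycleSpace G →
        c₀ * n ≤ B.card →
        (c₁ * n * Real.log n ≤ ∑ x ∈ B, (cycVecLen x : ℝ)) ∧
        ∃ e ∈ G.edgeSet, c₂ * Real.log n ≤ (B.filter fun x => x e = 1).card := by
  classical
  refine ⟨c₀ * c, c₀ * c / (d + 1), by positivity, by positivity, 2, ?_⟩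
  intro n hn G _hconn hdeg hgirth _hcs B hBcyc _hBli _hBspan hBcard
  haveI : DecidableRel G.Adj := fun a b => Classical.dec _
  have hn1 : (1:ℝ) ≤ n := by exact_mod_cast Nat.one_le_of_lt hn
  have hnpos : (0:ℝ) < n := lt_of_lt_of_le one_pos hn1
  have hlogn : 0 ≤ Real.log n := Real.log_nonneg hn1
  -- each basis vector is the indicator of a cycle, whose length is at least c log n
  have key : ∀ x ∈ B, c * Real.log n ≤ (cycVecLen x : ℝ) := by
    intro x hx
    obtain ⟨v, w, hw, hxe⟩ := hBcyc x hx
    have hset : (Finset.univ.filter fun e : Sym2 (Fin n) => x e = 1) = w.edges.toFinset := by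
      ext e
      simp only [Finset.mem_filter, Finset.mem_univ, true_and, List.mem_toFinset, hxe e]
      split_ifs with h <;> simp [h]
    have hlen : cycVecLen x = w.length := by
      rw [cycVecLen, hset, List.toFinset_card_of_nodup hw.edges_nodup,
        SimpleGraph.Walk.length_edges]
    rw [hlen]
    exact hgirth v w hw
  have hmul : 0 ≤ c * Real.log n := mul_nonneg hc.le hlogn
  have sum_ge : c₀ * c * n * Real.log n ≤ ∑ x ∈ B, (cycVecLen x : ℝ) := by
    calc c₀ * c * n * Real.log n = (c₀ * n) * (c * Real.log n) := by ring
      _ ≤ (B.card : ℝ) * (c * Real.log n) := mul_le_mul_of_nonneg_right hBcard hmul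
      _ ≤ ∑ x ∈ B, (cycVecLen x : ℝ) := by
          have := Finset.card_nsmul_le_sum B (fun x => (cycVecLen x : ℝ)) (c * Real.log n) key
          simpa [nsmul_eq_mul] using this
  refine ⟨sum_ge, ?_⟩
  -- B is nonempty, hence G has an edge
  have hBne : B.Nonempty := by
    rw [← Finset.card_pos]
    by_contra h
    push_neg at h
    have hB : B.card = 0 := by omega
    rw [hB] at hBcard
    push_cast at hBcard
    nlinarith
  obtain ⟨x₀, hx₀⟩ := hBne
  obtain ⟨v₀, w₀, hw₀, _⟩ := hBcyc x₀ hx₀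
  have hw₀len : 3 ≤ w₀.length := hw₀.three_le_length
  have hedges_ne : w₀.edges ≠ [] := by
    intro h
    have := SimpleGraph.Walk.length_edges w₀
    rw [h] at this
    simp at this
    omega
  obtain ⟨e₀, he₀⟩ := List.exists_mem_of_ne_nil _ hedges_ne
  have he₀E : e₀ ∈ G.edgeSet := w₀.edges_subset_edgeSet he₀
  -- double counting: total length equals sum over edges of multiplicities
  have hswap : ∑ x ∈ B, cycVecLen x
      = ∑ e ∈ G.edgeFinset, (B.filter fun x => x e = 1).card := by
    have h1 : ∑ x ∈ B, cycVecLen x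
        = ∑ e ∈ (Finset.univ : Finset (Sym2 (Fin n))), (B.filter fun x => x e = 1).card := by
      simp only [cycVecLen, Finset.card_filter]
      rw [Finset.sum_comm]
    rw [h1]
    refine (Finset.sum_subset (Finset.subset_univ G.edgeFinset) ?_).symm
    intro e _ heE
    rw [Finset.card_eq_zero, Finset.filter_eq_empty_iff]
    intro x hx hxe1
    obtain ⟨v, w, hw, hxe⟩ := hBcyc x hx
    rw [hxe e] at hxe1
    split_ifs at hxe1 with h
    · exact heE (by simpa [SimpleGraph.mem_edgeFinset] using w.edges_subset_edgeSet h)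
    · exact one_ne_zero hxe1.symm
  -- bound on the number of edges
  have hdegd : ∀ v, G.degree v ≤ d := by
    intro v
    have := hdeg v
    rwa [Set.ncard_eq_toFinset_card', ← SimpleGraph.neighborFinset_def,
      SimpleGraph.card_neighborFinset_eq_degree] at this
  have hEcard : G.edgeFinset.card ≤ (d + 1) * n := by
    have h2 : 2 * G.edgeFinset.card = ∑ v : Fin n, G.degree v :=
      (SimpleGraph.sum_degrees_eq_twice_card_edges G).symm
    have h3 : ∑ v : Fin n, G.degree v ≤ n * d := by
      calc ∑ v : Fin n, G.degree v ≤ ∑ _v : Fin n, d := Finset.sum_le_sum fun v _ => hdegd v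
        _ = n * d := by simp [Finset.sum_const, Finset.card_univ]
    have : 2 * G.edgeFinset.card ≤ n * d := h2 ▸ h3
    nlinarith [G.edgeFinset.card.zero_le]
  -- averaging
  by_contra hcon
  push_neg at hcon
  have hlt : ∀ e ∈ G.edgeFinset,
      ((B.filter fun x => x e = 1).card : ℝ) < c₀ * c / (d + 1) * Real.log n := by
    intro e he
    exact hcon e (SimpleGraph.mem_edgeFinset.mp he)
  have hEne : G.edgeFinset.Nonempty := ⟨e₀, SimpleGraph.mem_edgeFinset.mpr he₀E⟩
  have hsumlt : ∑ e ∈ G.edgeFinset, ((B.filter fun x => x e = 1).card : ℝ)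
      < G.edgeFinset.card * (c₀ * c / (d + 1) * Real.log n) := by
    have := Finset.sum_lt_sum_of_nonempty hEne hlt
    simpa [Finset.sum_const, nsmul_eq_mul] using this
  have hub : (G.edgeFinset.card : ℝ) * (c₀ * c / (d + 1) * Real.log n)
      ≤ c₀ * c * n * Real.log n := by
    have hE : (G.edgeFinset.card : ℝ) ≤ (d + 1) * n := by exact_mod_cast hEcard
    have hpos : 0 ≤ c₀ * c / (d + 1) * Real.log n := by positivity
    calc (G.edgeFinset.card : ℝ) * (c₀ * c / (d + 1) * Real.log n)
        ≤ ((d + 1) * n) * (c₀ * c / (d + 1) * Real.log n) :=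
          mul_le_mul_of_nonneg_right hE hpos
      _ = c₀ * c * n * Real.log n := by
          field_simp
  have hcast : (∑ x ∈ B, (cycVecLen x : ℝ))
      = ∑ e ∈ G.edgeFinset, ((B.filter fun x => x e = 1).card : ℝ) := by
    exact_mod_cast congrArg (Nat.cast : ℕ → ℝ) hswap
  rw [hcast] at sum_ge
  linarith
end

section
/- Let C_{K'} be a Majorana monomial of weight |K'| and let W = ∏_K exp(i ω_K C_K) be a product over pairwise disjoint index sets K with |K| ∈ {2,4}. Then W C_{K'} W† is a linear combination of Majorana monomials each of weight at most 3|K'|. -/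
/-- Ordered product of Majorana operators over an index set. -/
noncomputable def majProd {M d : ℕ} (c : Fin M → Matrix (Fin d) (Fin d) ℂ)
    (K : Finset (Fin M)) : Matrix (Fin d) (Fin d) ℂ :=
  ((K.sort (· ≤ ·)).map c).prod

/-- The Hermitian Majorana monomial `C_K = i^{|K|(|K|−1)/2} c_{k₁}⋯c_{k_{|K|}}`. -/
noncomputable def majCK {M d : ℕ} (c : Fin M → Matrix (Fin d) (Fin d) ℂ)
    (K : Finset (Fin M)) : Matrix (Fin d) (Fin d) ℂ :=
  (Complex.I ^ (K.card * (K.card - 1) / 2)) • majProd c K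

/-- The gate `exp(i ω C_K)`. -/
noncomputable def majGate {M d : ℕ} (c : Fin M → Matrix (Fin d) (Fin d) ℂ)
    (ω : ℝ) (K : Finset (Fin M)) : Matrix (Fin d) (Fin d) ℂ :=
  NormedSpace.exp ((Complex.I * (ω : ℂ)) • majCK c K)


open Complex

section ListLemmas

variable {M d : ℕ} (c : Fin M → Matrix (Fin d) (Fin d) ℂ)
variable (hsq : ∀ i, c i * c i = 1)
variable (hanti : ∀ i j, i ≠ j → c i * c j = -(c j * c i))

include hanti in
lemma maj_move (i : Fin M) : ∀ (l : List (Fin M)), i ∉ l →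
    c i * (l.map c).prod = ((-1 : ℂ) ^ l.length) • ((l.map c).prod * c i)
  | [], _ => by simp
  | j :: t, h => by
    have hij : i ≠ j := fun e => h (e ▸ List.mem_cons_self)
    have hit : i ∉ t := fun e => h (List.mem_cons_of_mem _ e)
    have ih := maj_move i t hit
    simp only [List.map_cons, List.prod_cons, List.length_cons]
    rw [← mul_assoc, hanti i j hij, neg_mul, mul_assoc, ih, mul_smul_comm, ← neg_smul, pow_succ]
    simp only [← mul_assoc]
    congr 1
    ring

include hsq hanti in
lemma maj_erase (i : Fin M) : ∀ (l : List (Fin M)), l.Nodup → i ∈ l →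
    ∃ z : ℂ, (z = 1 ∨ z = -1) ∧
      c i * (l.map c).prod = z • ((l.erase i).map c).prod
  | [], _, h => absurd h List.not_mem_nil
  | j :: t, hnd, h => by
    rcases eq_or_ne i j with rfl | hij
    · refine ⟨1, Or.inl rfl, ?_⟩
      simp only [List.map_cons, List.prod_cons, ← mul_assoc, hsq, one_mul, one_smul,
        List.erase_cons_head]
    · have hit : i ∈ t := (List.mem_cons.mp h).resolve_left hij
      obtain ⟨z, hz, he⟩ := maj_erase i t hnd.of_cons hit
      refine ⟨-z, by rcases hz with h | h <;> simp [h], ?_⟩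
      rw [List.erase_cons_tail (by simpa using fun e => hij e.symm)]
      simp only [List.map_cons, List.prod_cons]
      rw [← mul_assoc, hanti i j hij, neg_mul, mul_assoc, he, mul_smul_comm, neg_smul]

end ListLemmas

lemma sort_erase {M : ℕ} (B : Finset (Fin M)) (i : Fin M) :
    (B.erase i).sort (· ≤ ·) = (B.sort (· ≤ ·)).erase i := by
  refine (fun h1 h2 h3 => List.Perm.eq_of_pairwise' (r := (· ≤ ·)) h2 h3 h1) ?_ ?_ ?_
  · apply List.perm_of_nodup_nodup_toFinset_eq (Finset.sort_nodup _ _)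
      ((Finset.sort_nodup B _).erase i)
    rw [Finset.sort_toFinset]
    ext x
    simp [List.Nodup.mem_erase_iff (Finset.sort_nodup B _), Finset.mem_erase, and_comm]
  · exact Finset.pairwise_sort _ _
  · exact (Finset.pairwise_sort B (· ≤ ·)).sublist List.erase_sublist

section FinsetLemmas

variable {M d : ℕ} (c : Fin M → Matrix (Fin d) (Fin d) ℂ)
variable (hsq : ∀ i, c i * c i = 1)
variable (hanti : ∀ i j, i ≠ j → c i * c j = -(c j * c i))

lemma symmDiff_singleton_mem {α : Type*} [DecidableEq α] {i : α} {B : Finset α} (h : i ∈ B) :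
    symmDiff {i} B = B.erase i := by
  ext x
  simp only [Finset.mem_symmDiff, Finset.mem_singleton, Finset.mem_erase]
  constructor
  · rintro (⟨rfl, hx⟩ | ⟨hx, hne⟩)
    · exact absurd h hx
    · exact ⟨hne, hx⟩
  · rintro ⟨hne, hx⟩
    exact Or.inr ⟨hx, fun e => hne e⟩

lemma symmDiff_singleton_not_mem {α : Type*} [DecidableEq α] {i : α} {B : Finset α} (h : i ∉ B) :
    symmDiff {i} B = insert i B := by
  ext x
  simp only [Finset.mem_symmDiff, Finset.mem_singleton, Finset.mem_insert]
  constructor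
  · rintro (⟨rfl, -⟩ | ⟨hx, -⟩) <;> tauto
  · rintro (rfl | hx)
    · exact Or.inl ⟨rfl, h⟩
    · exact Or.inr ⟨hx, fun e => h (e ▸ hx)⟩

include hsq hanti in
lemma maj_single_mul (i : Fin M) (B : Finset (Fin M)) :
    ∃ z : ℂ, (z = 1 ∨ z = -1) ∧
      c i * majProd c B = z • majProd c (symmDiff {i} B) := by
  by_cases h : i ∈ B
  · obtain ⟨z, hz, he⟩ := maj_erase c hsq hanti i (B.sort (· ≤ ·)) (Finset.sort_nodup _ _)
      ((Finset.mem_sort _).2 h)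
    refine ⟨z, hz, ?_⟩
    rw [symmDiff_singleton_mem h, majProd, majProd, sort_erase, he]
  · obtain ⟨z, hz, he⟩ := maj_erase c hsq hanti i ((insert i B).sort (· ≤ ·))
      (Finset.sort_nodup _ _) ((Finset.mem_sort _).2 (Finset.mem_insert_self i B))
    rw [← majProd, ← sort_erase, Finset.erase_insert h, ← majProd] at he
    refine ⟨z, hz, ?_⟩
    have hz2 : z * z = 1 := by rcases hz with rfl | rfl <;> ring
    rw [symmDiff_singleton_not_mem h]
    have := congrArg (fun X => z • (c i * X)) he
    simp only [mul_smul_comm, smul_smul, hz2, one_smul, ← mul_assoc, hsq, one_mul] at this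
    exact this.symm

include hsq hanti in
lemma maj_list_mul : ∀ (l : List (Fin M)), l.Nodup → ∀ (B : Finset (Fin M)),
    ∃ z : ℂ, (z = 1 ∨ z = -1) ∧
      (l.map c).prod * majProd c B = z • majProd c (symmDiff l.toFinset B)
  | [], _, B => ⟨1, Or.inl rfl, by
      have : symmDiff (List.toFinset ([] : List (Fin M))) B = B := by
        ext x; simp [Finset.mem_symmDiff]
      simp only [List.toFinset_nil] at this ⊢
      simp [this, majProd]⟩
  | i :: t, hnd, B => by
    obtain ⟨z, hz, he⟩ := maj_list_mul t hnd.of_cons B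
    obtain ⟨w, hw, hw'⟩ := maj_single_mul c hsq hanti i (symmDiff t.toFinset B)
    refine ⟨w * z, by rcases hz with rfl | rfl <;> rcases hw with rfl | rfl <;> simp, ?_⟩
    have hit : i ∉ t.toFinset := by simpa using hnd.notMem
    have hset : symmDiff (i :: t).toFinset B = symmDiff {i} (symmDiff t.toFinset B) := by
      rw [← symmDiff_assoc]
      congr 1
      rw [symmDiff_singleton_not_mem hit]
      simp
    simp only [List.map_cons, List.prod_cons, mul_assoc, he, mul_smul_comm, hw', smul_smul, hset]
    ring_nf

include hsq hanti in
lemma maj_mul (A B : Finset (Fin M)) :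
    ∃ z : ℂ, (z = 1 ∨ z = -1) ∧
      majProd c A * majProd c B = z • majProd c (symmDiff A B) := by
  obtain ⟨z, hz, he⟩ := maj_list_mul c hsq hanti (A.sort (· ≤ ·)) (Finset.sort_nodup _ _) B
  rw [Finset.sort_toFinset] at he
  exact ⟨z, hz, he⟩

end FinsetLemmas

section SqComm

variable {M d : ℕ} (c : Fin M → Matrix (Fin d) (Fin d) ℂ)
variable (hsq : ∀ i, c i * c i = 1)
variable (hanti : ∀ i j, i ≠ j → c i * c j = -(c j * c i))

include hsq hanti in
lemma maj_list_sq : ∀ (l : List (Fin M)), l.Nodup →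
    (l.map c).prod * (l.map c).prod = ((-1 : ℂ) ^ (l.length.choose 2)) • 1
  | [], _ => by simp
  | i :: t, hnd => by
    have hit : i ∉ t := hnd.notMem
    have ih := maj_list_sq t hnd.of_cons
    have hmv := maj_move c hanti i t hit
    -- P t * c i = (-1)^|t| • (c i * P t)
    have hmv' : (t.map c).prod * c i = ((-1 : ℂ) ^ t.length) • (c i * (t.map c).prod) := by
      rw [hmv, smul_smul, ← pow_add, ← two_mul, pow_mul]
      simp
    simp only [List.map_cons, List.prod_cons, List.length_cons]
    calc c i * (t.map c).prod * (c i * (t.map c).prod)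
        = c i * ((t.map c).prod * c i) * (t.map c).prod := by
          simp only [mul_assoc]
      _ = ((-1 : ℂ) ^ t.length) • (c i * (c i * (t.map c).prod) * (t.map c).prod) := by
          rw [hmv']; simp only [mul_smul_comm, smul_mul_assoc]
      _ = ((-1 : ℂ) ^ t.length) • ((t.map c).prod * (t.map c).prod) := by
          rw [← mul_assoc, hsq, one_mul]
      _ = ((-1 : ℂ) ^ ((t.length + 1).choose 2)) • 1 := by
          rw [ih, smul_smul, ← pow_add, Nat.choose_succ_succ, Nat.choose_one_right, add_comm]

include hsq hanti in
lemma majCK_sq (K : Finset (Fin M)) : majCK c K * majCK c K = 1 := by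
  have h := maj_list_sq c hsq hanti (K.sort (· ≤ ·)) (Finset.sort_nodup _ _)
  rw [Finset.length_sort] at h
  have h' : majProd c K * majProd c K = ((-1 : ℂ) ^ (K.card.choose 2)) • 1 := h
  rw [majCK, smul_mul_assoc, mul_smul_comm, smul_smul, h', smul_smul,
    ← pow_add, ← two_mul, ← Nat.choose_two_right]
  rw [show ((2 : ℕ) * K.card.choose 2) = K.card.choose 2 * 2 from mul_comm _ _, pow_mul,
    ← pow_mul, mul_comm (K.card.choose 2) 2, pow_mul, Complex.I_sq, ← mul_pow]
  simp

include hanti in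
lemma maj_comm_even (A : Finset (Fin M)) (hA : Even A.card) (i : Fin M) (hi : i ∉ A) :
    c i * majProd c A = majProd c A * c i := by
  have := maj_move c hanti i (A.sort (· ≤ ·)) (by simpa using hi)
  rw [Finset.length_sort, hA.neg_one_pow, one_smul] at this
  exact this

include hanti in
lemma maj_comm_list : ∀ (l : List (Fin M)) (A : Finset (Fin M)), Even A.card →
    (∀ i ∈ l, i ∉ A) →
    majProd c A * (l.map c).prod = (l.map c).prod * majProd c A
  | [], A, _, _ => by simp
  | i :: t, A, hA, h => by
    have h1 : c i * majProd c A = majProd c A * c i :=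
      maj_comm_even c hanti A hA i (h i (List.mem_cons_self))
    have ih := maj_comm_list t A hA (fun j hj => h j (List.mem_cons_of_mem _ hj))
    simp only [List.map_cons, List.prod_cons]
    rw [← mul_assoc, ← h1, mul_assoc, ih, ← mul_assoc]

include hanti in
lemma maj_comm_disjoint (A B : Finset (Fin M)) (hA : Even A.card) (hAB : Disjoint A B) :
    majProd c A * majProd c B = majProd c B * majProd c A := by
  refine maj_comm_list c hanti (B.sort (· ≤ ·)) A hA fun i hi => ?_
  have hiB : i ∈ B := by simpa using hi
  exact fun hiA => (Finset.disjoint_left.mp hAB hiA) hiB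

end SqComm

section ExpLemma

open scoped Nat

lemma exp_involution_aux {𝔸 : Type*} [NormedRing 𝔸] [NormedAlgebra ℂ 𝔸] [CompleteSpace 𝔸]
    (A : 𝔸) (hA : A * A = 1) (z : ℂ) :
    NormedSpace.exp ((Complex.I * z) • A) =
      Complex.cos z • (1 : 𝔸) + (Complex.I * Complex.sin z) • A := by
  have hexp := NormedSpace.exp_series_hasSum_exp' (𝕂 := ℂ) ((Complex.I * z) • A)
  have hA2 : A ^ 2 = 1 := by rw [sq, hA]
  have hAe : ∀ k : ℕ, A ^ (2 * k) = 1 := fun k => by rw [pow_mul, hA2, one_pow]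
  have hAo : ∀ k : ℕ, A ^ (2 * k + 1) = A := fun k => by rw [pow_succ, pow_mul, hA2, one_pow,
    one_mul]
  have hpow : ∀ n : ℕ, ((n ! : ℂ)⁻¹) • ((Complex.I * z) • A) ^ n
      = ((Complex.I * z) ^ n / (n ! : ℂ)) • A ^ n := fun n => by
    rw [smul_pow, smul_smul, div_eq_inv_mul]
  have he : HasSum (fun k : ℕ => (((2 * k)! : ℂ)⁻¹) • ((Complex.I * z) • A) ^ (2 * k))
      (Complex.cos z • (1 : 𝔸)) := by
    have h1 := (Complex.hasSum_cos z).smul_const (1 : 𝔸)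
    have : (fun k : ℕ => (((2 * k)! : ℂ)⁻¹) • ((Complex.I * z) • A) ^ (2 * k))
        = fun k : ℕ => ((-1 : ℂ) ^ k * z ^ (2 * k) / ((2 * k)! : ℂ)) • (1 : 𝔸) := by
      funext k
      rw [hpow, hAe]
      congr 1
      rw [mul_pow, pow_mul, I_sq]
    rw [this]
    exact h1
  have ho : HasSum (fun k : ℕ => (((2 * k + 1)! : ℂ)⁻¹) • ((Complex.I * z) • A) ^ (2 * k + 1))
      ((Complex.I * Complex.sin z) • A) := by
    have h1 := ((Complex.hasSum_sin z).mul_left Complex.I).smul_const A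
    have : (fun k : ℕ => (((2 * k + 1)! : ℂ)⁻¹) • ((Complex.I * z) • A) ^ (2 * k + 1))
        = fun k : ℕ => (Complex.I * ((-1 : ℂ) ^ k * z ^ (2 * k + 1) / ((2 * k + 1)! : ℂ))) • A := by
      funext k
      rw [hpow, hAo]
      congr 1
      rw [show (Complex.I * z) ^ (2 * k + 1) = ((Complex.I * z) ^ 2) ^ k * (Complex.I * z) by
        rw [← pow_mul, pow_succ]]
      rw [mul_pow, I_sq]
      ring
    rw [this]
    exact h1
  exact hexp.unique (HasSum.even_add_odd he ho)

end ExpLemma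

lemma majGate_eq {M d : ℕ} (c : Fin M → Matrix (Fin d) (Fin d) ℂ) (ω : ℝ) (K : Finset (Fin M))
    (hK : majCK c K * majCK c K = 1) :
    majGate c ω K = Complex.cos (ω : ℂ) • (1 : Matrix (Fin d) (Fin d) ℂ)
      + (Complex.I * Complex.sin (ω : ℂ)) • majCK c K := by
  letI : SeminormedRing (Matrix (Fin d) (Fin d) ℂ) := Matrix.linftyOpSemiNormedRing
  letI : NormedRing (Matrix (Fin d) (Fin d) ℂ) := Matrix.linftyOpNormedRing
  letI : NormedAlgebra ℂ (Matrix (Fin d) (Fin d) ℂ) := Matrix.linftyOpNormedAlgebra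
  exact exp_involution_aux (majCK c K) hK (ω : ℂ)

section Conj
variable {M d : ℕ} (c : Fin M → Matrix (Fin d) (Fin d) ℂ)

lemma conjA (ω : ℝ) (K T : Finset (Fin M))
    (hK2 : majCK c K * majCK c K = 1)
    (hcomm : majCK c K * majProd c T = majProd c T * majCK c K) :
    majGate c ω K * majProd c T * majGate c (-ω) K = majProd c T := by
  rw [majGate_eq c ω K hK2, majGate_eq c (-ω) K hK2]
  have hc : ((-ω : ℝ) : ℂ) = -(ω : ℂ) := by push_cast; ring
  rw [hc, Complex.cos_neg, Complex.sin_neg, mul_neg]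
  set a := Complex.cos (ω : ℂ)
  set b := Complex.I * Complex.sin (ω : ℂ)
  set C := majCK c K
  set X := majProd c T
  have hab : a * a - b * b = 1 := by
    simp only [a, b]
    linear_combination (-(Complex.sin (ω : ℂ)) ^ 2) * Complex.I_sq
      + Complex.sin_sq_add_cos_sq (ω : ℂ)
  simp only [add_mul, mul_add, smul_mul_assoc, mul_smul_comm, smul_smul, one_mul, mul_one,
    neg_smul, mul_neg, smul_neg]
  rw [hcomm, mul_assoc, hK2, mul_one]
  match_scalars
  · linear_combination hab
  · ring

end Conj


section Main

variable {M d : ℕ} (c : Fin M → Matrix (Fin d) (Fin d) ℂ)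
variable (hsq : ∀ i, c i * c i = 1)
variable (hanti : ∀ i j, i ≠ j → c i * c j = -(c j * c i))

include hsq hanti in
lemma conjB (ω : ℝ) (K T : Finset (Fin M)) :
    majGate c ω K * majProd c T * majGate c (-ω) K ∈
      Submodule.span ℂ {majProd c T, majProd c (symmDiff T K)} := by
  have hK2 := majCK_sq c hsq hanti K
  rw [majGate_eq c ω K hK2, majGate_eq c (-ω) K hK2]
  have hc : ((-ω : ℝ) : ℂ) = -(ω : ℂ) := by push_cast; ring
  rw [hc, Complex.cos_neg, Complex.sin_neg, mul_neg]
  set a := Complex.cos (ω : ℂ)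
  set b := Complex.I * Complex.sin (ω : ℂ)
  set C := majCK c K with hCdef
  set X := majProd c T with hXdef
  set e := K.card * (K.card - 1) / 2
  obtain ⟨z1, -, h1⟩ := maj_mul c hsq hanti T K
  obtain ⟨z2, -, h2⟩ := maj_mul c hsq hanti K T
  obtain ⟨z3, -, h3⟩ := maj_mul c hsq hanti (symmDiff T K) K
  rw [symmDiff_comm K T] at h2
  rw [symmDiff_symmDiff_cancel_right] at h3
  set V := Submodule.span ℂ {majProd c T, majProd c (symmDiff T K)}
  have hgen1 : X ∈ V := Submodule.subset_span (by left; rfl)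
  have hgen2 : majProd c (symmDiff T K) ∈ V := Submodule.subset_span (by right; rfl)
  have hXC : X * C = (Complex.I ^ e * z1) • majProd c (symmDiff T K) := by
    rw [hCdef, majCK, mul_smul_comm, hXdef, h1, smul_smul]
  have hCX : C * X = (Complex.I ^ e * z2) • majProd c (symmDiff T K) := by
    rw [hCdef, majCK, smul_mul_assoc, hXdef, h2, smul_smul]
  have hCXC : C * X * C = (Complex.I ^ e * z2 * (Complex.I ^ e * z3)) • X := by
    rw [hCX, smul_mul_assoc, hCdef, majCK, mul_smul_comm, h3, smul_smul, smul_smul, hXdef]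
    congr 1
    show Complex.I ^ e * z2 * Complex.I ^ e * z3 = _
    ring
  simp only [add_mul, mul_add, smul_mul_assoc, mul_smul_comm, smul_smul, one_mul, mul_one,
    neg_smul, mul_neg, smul_neg]
  rw [hCXC, hCX, hXC]
  simp only [smul_smul]
  exact Submodule.add_mem _
    (Submodule.smul_mem _ _ (Submodule.add_mem _ (Submodule.smul_mem _ _ hgen1)
      (Submodule.smul_mem _ _ hgen2)))
    (Submodule.neg_mem _ (Submodule.smul_mem _ _ (Submodule.add_mem _
      (Submodule.smul_mem _ _ hgen2) (Submodule.smul_mem _ _ hgen1))))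

end Main

section Union

def unionSnd {M : ℕ} (L : List (ℝ × Finset (Fin M))) : Finset (Fin M) :=
  L.foldr (fun t S => t.2 ∪ S) ∅

lemma unionSnd_foldr {M : ℕ} : ∀ (L : List (ℝ × Finset (Fin M))) (S : Finset (Fin M)),
    L.foldr (fun t S => t.2 ∪ S) S = unionSnd L ∪ S
  | [], S => by simp [unionSnd]
  | t :: L, S => by
    simp only [List.foldr_cons, unionSnd, unionSnd_foldr L S, Finset.union_assoc]

lemma unionSnd_append {M : ℕ} (L : List (ℝ × Finset (Fin M))) (t : ℝ × Finset (Fin M)) :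
    unionSnd (L ++ [t]) = unionSnd L ∪ t.2 := by
  rw [unionSnd, List.foldr_append]
  simp only [List.foldr_cons, List.foldr_nil, Finset.union_empty]
  exact unionSnd_foldr L t.2

lemma disjoint_unionSnd {M : ℕ} (K : Finset (Fin M)) :
    ∀ (L : List (ℝ × Finset (Fin M))), (∀ s ∈ L, Disjoint K s.2) → Disjoint K (unionSnd L)
  | [], _ => by simp [unionSnd]
  | t :: L, h => by
    rw [show unionSnd (t :: L) = t.2 ∪ unionSnd L from rfl, Finset.disjoint_union_right]
    exact ⟨by simpa using h t (List.mem_cons_self),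
      disjoint_unionSnd K L fun s hs => h s (List.mem_cons_of_mem _ hs)⟩

end Union

section Aux

variable {M d : ℕ} (c : Fin M → Matrix (Fin d) (Fin d) ℂ)
variable (hsq : ∀ i, c i * c i = 1)
variable (hanti : ∀ i j, i ≠ j → c i * c j = -(c j * c i))

include hsq hanti in
lemma maj_aux (K' : Finset (Fin M)) (L : List (ℝ × Finset (Fin M))) :
    ((L.map Prod.snd).Pairwise Disjoint) →
    (∀ t ∈ L, t.2.card = 2 ∨ t.2.card = 4) →
    ∀ T : Finset (Fin M), (∀ t ∈ L, T ∩ t.2 = K' ∩ t.2) →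
    (T.card + 2 * (K' ∩ unionSnd L).card ≤ 3 * K'.card) →
    ((L.map fun t => majGate c t.1 t.2).prod * majProd c T *
        (L.reverse.map fun t => majGate c (-t.1) t.2).prod) ∈
      Submodule.span ℂ
        {A : Matrix (Fin d) (Fin d) ℂ |
          ∃ K'' : Finset (Fin M), K''.card ≤ 3 * K'.card ∧ A = majProd c K''} := by
  induction L using List.reverseRecOn with
  | nil =>
    intro _ _ T _ hbound
    simp only [List.map_nil, List.prod_nil, one_mul, mul_one, List.reverse_nil]
    exact Submodule.subset_span ⟨T, by omega, rfl⟩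
  | append_singleton L' t ih =>
    intro hdisj hc4 T hTK hbound
    set K := t.2 with hKdef
    -- disentangle hypotheses
    rw [List.map_append, List.pairwise_append] at hdisj
    obtain ⟨hd', -, hd12⟩ := hdisj
    have hKdisj : ∀ s ∈ L', Disjoint K s.2 := fun s hs =>
      (hd12 s.2 (List.mem_map_of_mem (f := Prod.snd) hs) K (by simp [hKdef])).symm
    have hc4' : ∀ s ∈ L', s.2.card = 2 ∨ s.2.card = 4 :=
      fun s hs => hc4 s (List.mem_append_left _ hs)
    have hcK : K.card = 2 ∨ K.card = 4 := hc4 t (List.mem_append_right _ (by simp))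
    have hTKt : T ∩ K = K' ∩ K := hTK t (List.mem_append_right _ (by simp))
    have hTK' : ∀ s ∈ L', T ∩ s.2 = K' ∩ s.2 := fun s hs => hTK s (List.mem_append_left _ hs)
    have hU : unionSnd (L' ++ [t]) = unionSnd L' ∪ K := unionSnd_append L' t
    have hUdisj : Disjoint K (unionSnd L') := disjoint_unionSnd K L' hKdisj
    have hcut : (K' ∩ unionSnd (L' ++ [t])).card
        = (K' ∩ unionSnd L').card + (K' ∩ K).card := by
      rw [hU, Finset.inter_union_distrib_left]
      exact Finset.card_union_of_disjoint
        (Finset.disjoint_of_subset_left Finset.inter_subset_right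
          (Finset.disjoint_of_subset_right Finset.inter_subset_right hUdisj.symm))
    -- rewrite the products
    have hprod : ((L' ++ [t]).map fun s => majGate c s.1 s.2).prod
        = (L'.map fun s => majGate c s.1 s.2).prod * majGate c t.1 K := by
      rw [List.map_append, List.prod_append]; simp; rfl
    have hrev : ((L' ++ [t]).reverse.map fun s => majGate c (-s.1) s.2).prod
        = majGate c (-t.1) K * (L'.reverse.map fun s => majGate c (-s.1) s.2).prod := by
      rw [List.reverse_append]; simp; rfl
    rw [hprod, hrev]
    set P := (L'.map fun s => majGate c s.1 s.2).prod
    set Q := (L'.reverse.map fun s => majGate c (-s.1) s.2).prod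
    have hassoc : P * majGate c t.1 K * majProd c T * (majGate c (-t.1) K * Q)
        = P * (majGate c t.1 K * majProd c T * majGate c (-t.1) K) * Q := by
      simp only [mul_assoc]
    rw [hassoc]
    by_cases hempty : K' ∩ K = ∅
    · -- the gate commutes with the monomial
      have hTdisj : Disjoint K T := by
        rw [disjoint_comm, Finset.disjoint_iff_inter_eq_empty, hTKt, hempty]
      have heven : Even K.card := by rcases hcK with h | h <;> rw [h] <;> decide
      have hcomm : majCK c K * majProd c T = majProd c T * majCK c K := by
        rw [majCK, smul_mul_assoc, mul_smul_comm,
          maj_comm_disjoint c hanti K T heven hTdisj]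
      rw [conjA c t.1 K T (majCK_sq c hsq hanti K) hcomm]
      refine ih hd' hc4' T hTK' ?_
      have hsub : (K' ∩ unionSnd L').card ≤ (K' ∩ unionSnd (L' ++ [t])).card := by omega
      omega
    · -- the gate may anticommute
      have hx : 1 ≤ (K' ∩ K).card := by
        rcases Finset.eq_empty_or_nonempty (K' ∩ K) with h | h
        · exact absurd h hempty
        · exact Finset.card_pos.mpr h
      have hK4 : K.card ≤ 4 := by omega
      have hmem1 : P * majProd c T * Q ∈
          Submodule.span ℂ {A : Matrix (Fin d) (Fin d) ℂ |
            ∃ K'' : Finset (Fin M), K''.card ≤ 3 * K'.card ∧ A = majProd c K''} := by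
        refine ih hd' hc4' T hTK' ?_
        omega
      have hmem2 : P * majProd c (symmDiff T K) * Q ∈
          Submodule.span ℂ {A : Matrix (Fin d) (Fin d) ℂ |
            ∃ K'' : Finset (Fin M), K''.card ≤ 3 * K'.card ∧ A = majProd c K''} := by
        refine ih hd' hc4' (symmDiff T K) ?_ ?_
        · intro s hs
          have hds : Disjoint K s.2 := hKdisj s hs
          rw [← hTK' s hs]
          ext x
          simp only [Finset.mem_inter, Finset.mem_symmDiff]
          constructor
          · rintro ⟨hx1 | hx2, hxs⟩
            · exact ⟨hx1.1, hxs⟩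
            · exact absurd (Finset.disjoint_left.mp hds hx2.1) (fun h => h hxs)
          · rintro ⟨hxT, hxs⟩
            exact ⟨Or.inl ⟨hxT, Finset.disjoint_right.mp hds hxs⟩, hxs⟩
        · have e1 : (T \ K).card + (T ∩ K).card = T.card := Finset.card_sdiff_add_card_inter T K
          have e2 : (K \ T).card + (K ∩ T).card = K.card := Finset.card_sdiff_add_card_inter K T
          have e3 : (symmDiff T K).card = (T \ K).card + (K \ T).card := by
            rw [symmDiff_def]
            exact Finset.card_union_of_disjoint disjoint_sdiff_sdiff
          have e4 : (K ∩ T).card = (T ∩ K).card := by rw [Finset.inter_comm]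
          have e5 : (T ∩ K).card = (K' ∩ K).card := by rw [hTKt]
          omega
      have hY := conjB c hsq hanti t.1 K T
      refine Submodule.span_induction ?_ ?_ ?_ ?_ hY
      · rintro x (rfl | rfl)
        · exact hmem1
        · exact hmem2
      · simp only [mul_zero, zero_mul]
        exact Submodule.zero_mem _
      · intro x y _ _ hx hy
        have : P * (x + y) * Q = P * x * Q + P * y * Q := by noncomm_ring
        rw [this]
        exact Submodule.add_mem _ hx hy
      · intro a x _ hx
        have : P * (a • x) * Q = a • (P * x * Q) := by
          rw [mul_smul_comm, smul_mul_assoc]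
        rw [this]
        exact Submodule.smul_mem _ _ hx

end Aux

/-- If `W = ∏_K exp(i ω_K C_K)` is a single layer of gates over pairwise
disjoint index sets `K` with `|K| ∈ {2,4}`, then `W C_{K'} W†` is a linear combination of
Majorana monomials, each of weight at most `3|K'|`. -/
theorem layer_conjugation_weight_bound {n d : ℕ}
    (c : Fin (2 * n) → Matrix (Fin d) (Fin d) ℂ)
    (hherm : ∀ i, (c i).IsHermitian)
    (hsq : ∀ i, c i * c i = 1)
    (hanti : ∀ i j, i ≠ j → c i * c j = -(c j * c i))
    (K' : Finset (Fin (2 * n)))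
    (L : List (ℝ × Finset (Fin (2 * n))))
    (hdisj : (L.map Prod.snd).Pairwise Disjoint)
    (hcard : ∀ t ∈ L, t.2.card = 2 ∨ t.2.card = 4) :
    ((L.map fun t => majGate c t.1 t.2).prod * majCK c K' *
        (L.reverse.map fun t => majGate c (-t.1) t.2).prod) ∈
      Submodule.span ℂ
        {A : Matrix (Fin d) (Fin d) ℂ |
          ∃ K'' : Finset (Fin (2 * n)), K''.card ≤ 3 * K'.card ∧ A = majProd c K''} := by
  rw [majCK, mul_smul_comm, smul_mul_assoc]
  refine Submodule.smul_mem _ _ ?_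
  refine maj_aux c hsq hanti K' L hdisj hcard K' (fun t ht => rfl) ?_
  have h1 : (K' ∩ unionSnd L).card ≤ K'.card :=
    Finset.card_le_card Finset.inter_subset_left
  omega
end

section
/- Let C be an operator that is a linear combination of Majorana monomials each of weight at most L/2 on 2n Majorana operators, and let π(s) = ∏_{j=1}^n (I + (−1)^{s_j} i c_{2j−1}c_{2j})/2 for s ∈ {0,1}^n. Then for any bitstrings s₁, s₂ with Hamming distance |s₁ − s₂| > L/2, one has π(s₁) C π(s₂) = 0. -/
/-- Index of the Majorana operator `c_{2j−1}` (0-based: `c_{2j}`). -/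
def idx₀ {n : ℕ} (j : Fin n) : Fin (2 * n) := ⟨2 * j.1, by have := j.2; omega⟩

/-- Index of the Majorana operator `c_{2j}` (0-based: `c_{2j+1}`). -/
def idx₁ {n : ℕ} (j : Fin n) : Fin (2 * n) := ⟨2 * j.1 + 1, by have := j.2; omega⟩

/-- The projector `π(s) = ∏_j (I + (−1)^{s_j} i c_{2j−1}c_{2j})/2`. -/
noncomputable def numProj {n d : ℕ} (c : Fin (2 * n) → Matrix (Fin d) (Fin d) ℂ)
    (s : Fin n → Bool) : Matrix (Fin d) (Fin d) ℂ :=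
  ((List.finRange n).map fun j =>
    ((1 : ℂ) / 2) • ((1 : Matrix (Fin d) (Fin d) ℂ) +
      ((if s j then (-1 : ℂ) else 1) * Complex.I) • (c (idx₀ j) * c (idx₁ j)))).prod

section helpers

variable {d : ℕ}

/-- If `A` anticommutes with every member of a list, it (anti)commutes with the product. -/
lemma anticomm_list_prod (A : Matrix (Fin d) (Fin d) ℂ) (l : List (Matrix (Fin d) (Fin d) ℂ))
    (h : ∀ x ∈ l, A * x = -(x * A)) :
    A * l.prod = ((-1 : ℂ) ^ l.length) • (l.prod * A) := by
  induction l with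
  | nil => simp
  | cons x xs ih =>
    have hx := h x List.mem_cons_self
    have ih' := ih (fun y hy => h y (List.mem_cons_of_mem _ hy))
    simp only [List.prod_cons, List.length_cons]
    calc A * (x * xs.prod) = (A * x) * xs.prod := by rw [mul_assoc]
      _ = -(x * (A * xs.prod)) := by rw [hx]; simp [mul_assoc]
      _ = -(x * (((-1 : ℂ) ^ xs.length) • (xs.prod * A))) := by rw [ih']
      _ = ((-1 : ℂ) ^ (xs.length + 1)) • (x * xs.prod * A) := by
            rw [mul_smul_comm, ← neg_smul, pow_succ]
            ring_nf
            rw [mul_assoc]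

/-- If `A` anticommutes with `x` and `y`, it commutes with `x * y`. -/
lemma swap2 (A x y : Matrix (Fin d) (Fin d) ℂ)
    (hx : A * x = -(x * A)) (hy : A * y = -(y * A)) :
    A * (x * y) = (x * y) * A := by
  calc A * (x * y) = (A * x) * y := by rw [mul_assoc]
    _ = -(x * (A * y)) := by rw [hx]; simp [mul_assoc]
    _ = -(x * (-(y * A))) := by rw [hy]
    _ = (x * y) * A := by simp [mul_assoc]

/-- A pair `x*y` of elements each anticommuting with a list commutes with the list product. -/
lemma pair_comm_prod (x y : Matrix (Fin d) (Fin d) ℂ) (l : List (Matrix (Fin d) (Fin d) ℂ))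
    (hx : ∀ z ∈ l, x * z = -(z * x)) (hy : ∀ z ∈ l, y * z = -(z * y)) :
    (x * y) * l.prod = l.prod * (x * y) := by
  have h1 := anticomm_list_prod x l hx
  have h2 := anticomm_list_prod y l hy
  have key : ((-1 : ℂ) ^ l.length) * ((-1 : ℂ) ^ l.length) = 1 := by
    rw [← pow_add, ← two_mul, pow_mul]; norm_num
  calc (x * y) * l.prod = x * (y * l.prod) := by rw [mul_assoc]
    _ = x * (((-1 : ℂ) ^ l.length) • (l.prod * y)) := by rw [h2]
    _ = ((-1 : ℂ) ^ l.length) • ((x * l.prod) * y) := by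
          rw [mul_smul_comm, mul_assoc]
    _ = ((-1 : ℂ) ^ l.length) • ((((-1 : ℂ) ^ l.length) • (l.prod * x)) * y) := by rw [h1]
    _ = (((-1 : ℂ) ^ l.length) * ((-1 : ℂ) ^ l.length)) • (l.prod * (x * y)) := by
          rw [smul_mul_assoc, smul_smul, mul_assoc]
    _ = l.prod * (x * y) := by rw [key, one_smul]


/-- If `x` and `y` each commute with `B`, so does `x*y`. -/
lemma mul_comm_of_comm {d : ℕ} (x y B : Matrix (Fin d) (Fin d) ℂ)
    (hx : x * B = B * x) (hy : y * B = B * y) : (x * y) * B = B * (x * y) := by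
  rw [mul_assoc, hy, ← mul_assoc, hx, mul_assoc]

/-- Commutation of the projector factors. -/
lemma factor_commute {d : ℕ} (X Y : Matrix (Fin d) (Fin d) ℂ) (α β γ δ : ℂ)
    (h : Commute X Y) :
    Commute (α • ((1 : Matrix (Fin d) (Fin d) ℂ) + β • X)) (γ • (1 + δ • Y)) := by
  have h3 : Commute X ((1 : Matrix (Fin d) (Fin d) ℂ) + δ • Y) :=
    (Commute.one_right X).add_right (h.smul_right δ)
  have h6 : Commute ((1 : Matrix (Fin d) (Fin d) ℂ) + β • X) (1 + δ • Y) :=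
    (Commute.one_left _).add_left (h3.smul_left β)
  exact (h6.smul_left α).smul_right γ

/-- Orthogonality of projector factors with opposite signs. -/
lemma proj_ortho {d : ℕ} (X : Matrix (Fin d) (Fin d) ℂ) (hX : X * X = -1)
    (α : ℂ) (hα : α * α = -1) :
    (((1:ℂ)/2) • ((1 : Matrix (Fin d) (Fin d) ℂ) + α • X)) *
      (((1:ℂ)/2) • (1 + (-α) • X)) = 0 := by
  have key : ((1 : Matrix (Fin d) (Fin d) ℂ) + α • X) * (1 + (-α) • X) = 0 := by
    have step : ((1 : Matrix (Fin d) (Fin d) ℂ) + α • X) * (1 + (-α) • X) =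
        1 + α • X + (-α) • X + (α * -α) • (X * X) := by
      simp only [mul_add, add_mul, mul_one, one_mul, smul_mul_assoc, mul_smul_comm,
        smul_smul]
      module
    have hcoef : α * -α = 1 := by rw [mul_neg, hα, neg_neg]
    rw [step, hX, hcoef, one_smul, neg_smul]
    abel
  rw [smul_mul_assoc, mul_smul_comm, key, smul_zero, smul_zero]

/-- The final annihilation pattern. -/
lemma annihilate {d : ℕ} (R₁ R₂ A f₁ f₂ : Matrix (Fin d) (Fin d) ℂ)
    (hcom : A * f₂ = f₂ * A) (hz : f₁ * f₂ = 0) :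
    R₁ * f₁ * A * (f₂ * R₂) = 0 := by
  have e : R₁ * f₁ * A * (f₂ * R₂) = R₁ * (f₁ * (A * f₂)) * R₂ := by
    simp only [mul_assoc]
  rw [e, hcom, ← mul_assoc f₁, hz, zero_mul, mul_zero, zero_mul]

end helpers

/-- If `C` is a linear combination of Majorana monomials of weight at most
`L/2` (i.e. `2·weight ≤ L`) on `2n` Majorana operators, then `π(s₁) C π(s₂) = 0` whenever
the Hamming distance between `s₁` and `s₂` exceeds `L/2` (i.e. `L < 2·distance`). -/
theorem low_weight_operator_annihilated {n d : ℕ} (L : ℕ)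
    (c : Fin (2 * n) → Matrix (Fin d) (Fin d) ℂ)
    (hherm : ∀ i, (c i).IsHermitian)
    (hsq : ∀ i, c i * c i = 1)
    (hanti : ∀ i j, i ≠ j → c i * c j = -(c j * c i))
    (C : Matrix (Fin d) (Fin d) ℂ)
    (hC : C ∈ Submodule.span ℂ
      {A : Matrix (Fin d) (Fin d) ℂ |
        ∃ K : Finset (Fin (2 * n)), 2 * K.card ≤ L ∧ A = majProd c K})
    (s₁ s₂ : Fin n → Bool) (hdist : L < 2 * hammingDist s₁ s₂) :
    numProj c s₁ * C * numProj c s₂ = 0 := by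
  induction hC using Submodule.span_induction with
  | zero => simp
  | add x y hx hy ihx ihy => rw [mul_add, add_mul, ihx, ihy, add_zero]
  | smul a x hx ihx => rw [mul_smul_comm, smul_mul_assoc, ihx, smul_zero]
  | mem A hA =>
    obtain ⟨K, hK, rfl⟩ := hA
    -- Find an index j where s₁, s₂ differ and K avoids {idx₀ j, idx₁ j}.
    set D : Finset (Fin n) := Finset.univ.filter (fun j => s₁ j ≠ s₂ j) with hD
    set T : Finset (Fin n) := Finset.univ.filter (fun j => idx₀ j ∈ K ∨ idx₁ j ∈ K) with hT
    have hDcard : D.card = hammingDist s₁ s₂ := rfl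
    have hTcard : T.card ≤ K.card := by
      have hn : ∀ k : Fin (2 * n), k.1 / 2 < n := fun k => by have := k.2; omega
      have hsub : T ⊆ K.image (fun k => (⟨k.1 / 2, hn k⟩ : Fin n)) := by
        intro j hj
        rw [hT, Finset.mem_filter] at hj
        rcases hj.2 with h | h
        · exact Finset.mem_image.2 ⟨idx₀ j, h, by
            apply Fin.eq_of_val_eq; simp only [idx₀]; omega⟩
        · exact Finset.mem_image.2 ⟨idx₁ j, h, by
            apply Fin.eq_of_val_eq; simp only [idx₁]; omega⟩
      exact le_trans (Finset.card_le_card hsub) (Finset.card_image_le)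
    have hex : ∃ j, j ∈ D \ T := by
      have h1 : D.card ≤ (D \ T).card + T.card := Finset.card_le_card_sdiff_add_card
      have h2 : 0 < (D \ T).card := by omega
      obtain ⟨j, hj⟩ := Finset.card_pos.mp h2
      exact ⟨j, hj⟩
    obtain ⟨j, hj⟩ := hex
    rw [Finset.mem_sdiff, hD, hT, Finset.mem_filter, Finset.mem_filter] at hj
    have hjd : s₁ j ≠ s₂ j := hj.1.2
    have hj0 : idx₀ j ∉ K := fun h => hj.2 ⟨Finset.mem_univ _, Or.inl h⟩
    have hj1 : idx₁ j ∉ K := fun h => hj.2 ⟨Finset.mem_univ _, Or.inr h⟩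
    clear hj hK hdist hherm
    -- notation
    set X : Fin n → Matrix (Fin d) (Fin d) ℂ := fun a => c (idx₀ a) * c (idx₁ a) with hX
    have hidx01 : ∀ a : Fin n, idx₀ a ≠ idx₁ a := by
      intro a h; rw [Fin.ext_iff] at h; simp [idx₀, idx₁] at h
    have hidxne : ∀ a b : Fin n, a ≠ b →
        idx₀ a ≠ idx₀ b ∧ idx₀ a ≠ idx₁ b ∧ idx₁ a ≠ idx₀ b ∧ idx₁ a ≠ idx₁ b := by
      intro a b hab
      have : a.1 ≠ b.1 := fun h => hab (Fin.eq_of_val_eq h)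
      refine ⟨?_, ?_, ?_, ?_⟩ <;> (intro h; rw [Fin.ext_iff] at h; simp [idx₀, idx₁] at h; omega)
    have hXcomm : ∀ a b : Fin n, a ≠ b → Commute (X a) (X b) := by
      intro a b hab
      obtain ⟨h1, h2, h3, h4⟩ := hidxne a b hab
      have c0 : c (idx₀ a) * X b = X b * c (idx₀ a) :=
        swap2 _ _ _ (hanti _ _ h1) (hanti _ _ h2)
      have c1 : c (idx₁ a) * X b = X b * c (idx₁ a) :=
        swap2 _ _ _ (hanti _ _ h3) (hanti _ _ h4)
      exact (mul_comm_of_comm _ _ _ c0 c1)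
    set f : (Fin n → Bool) → Fin n → Matrix (Fin d) (Fin d) ℂ := fun s a =>
      ((1 : ℂ) / 2) • ((1 : Matrix (Fin d) (Fin d) ℂ) +
        ((if s a then (-1 : ℂ) else 1) * Complex.I) • X a) with hf
    have hnum : ∀ s, numProj c s = ((List.finRange n).map (f s)).prod := fun s => rfl
    have hfc : ∀ (s s' : Fin n → Bool) (a b : Fin n), a ≠ b → Commute (f s a) (f s' b) :=
      fun s s' a b hab => factor_commute _ _ _ _ _ _ (hXcomm a b hab)
    have hpw : ∀ s, ((List.finRange n).map (f s)).Pairwise Commute := by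
      intro s
      exact List.Pairwise.map _ (fun a b hab => hfc s s a b hab) (List.nodup_finRange n)
    have hjmem : j ∈ List.finRange n := List.mem_finRange j
    -- split off the j-th factor on each side
    have e1 : numProj c s₁ = ((((List.finRange n).erase j).map (f s₁)).prod) * f s₁ j := by
      rw [hnum]
      have hperm : (List.finRange n).Perm (((List.finRange n).erase j) ++ [j]) :=
        (List.perm_cons_erase hjmem).trans (List.perm_append_singleton j _).symm
      rw [List.Perm.prod_eq' (hperm.map (f s₁)) (hpw s₁), List.map_append]
      simp
    have e2 : numProj c s₂ = f s₂ j * ((((List.finRange n).erase j).map (f s₂)).prod) := by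
      rw [hnum]
      have hperm : (List.finRange n).Perm (j :: (List.finRange n).erase j) :=
        List.perm_cons_erase hjmem
      rw [List.Perm.prod_eq' (hperm.map (f s₂)) (hpw s₂)]
      simp
    -- majProd commutes with X j, hence with f s₂ j
    have hmemK : ∀ z ∈ (K.sort (· ≤ ·)).map c, ∃ k ∈ K, z = c k := by
      intro z hz
      obtain ⟨k, hk, rfl⟩ := List.mem_map.mp hz
      exact ⟨k, (Finset.mem_sort _).mp hk, rfl⟩
    have hXA : X j * majProd c K = majProd c K * X j := by
      apply pair_comm_prod
      · intro z hz; obtain ⟨k, hk, rfl⟩ := hmemK z hz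
        exact hanti _ _ (fun h => hj0 (h ▸ hk))
      · intro z hz; obtain ⟨k, hk, rfl⟩ := hmemK z hz
        exact hanti _ _ (fun h => hj1 (h ▸ hk))
    have hAf : majProd c K * f s₂ j = f s₂ j * majProd c K := by
      have hc : Commute (majProd c K) (X j) := hXA.symm
      have : Commute (majProd c K) (f s₂ j) := by
        rw [hf]
        exact (((Commute.one_right _).add_right (hc.smul_right _)).smul_right _)
      exact this
    -- orthogonality f s₁ j * f s₂ j = 0
    have hXsq : X j * X j = -1 := by
      rw [hX]
      calc c (idx₀ j) * c (idx₁ j) * (c (idx₀ j) * c (idx₁ j))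
          = c (idx₀ j) * (c (idx₁ j) * c (idx₀ j)) * c (idx₁ j) := by
            simp only [mul_assoc]
        _ = -(c (idx₀ j) * c (idx₀ j) * (c (idx₁ j) * c (idx₁ j))) := by
            rw [hanti _ _ (Ne.symm (hidx01 j))]
            simp only [mul_neg, neg_mul, mul_assoc]
        _ = -1 := by rw [hsq, hsq, one_mul]
    have hzero : f s₁ j * f s₂ j = 0 := by
      simp only [hf]
      have hcoef : (if s₂ j then (-1:ℂ) else 1) * Complex.I =
          -((if s₁ j then (-1:ℂ) else 1) * Complex.I) := by
        rcases Bool.eq_false_or_eq_true (s₁ j) with h1 | h1 <;>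
          rcases Bool.eq_false_or_eq_true (s₂ j) with h2 | h2 <;>
          first
          | exact absurd (h1.trans h2.symm) hjd
          | (rw [h1, h2]; norm_num)
      rw [hcoef]
      apply proj_ortho _ hXsq
      rcases Bool.eq_false_or_eq_true (s₁ j) with h1 | h1 <;> rw [h1] <;>
        norm_num
    rw [e1, e2]
    exact annihilate _ _ _ _ _ hAf hzero
end

section
/- Let H_qb be an n-qubit Hamiltonian and let H be the 3n/2-fermion Hamiltonian obtained by replacing each Pauli X_j ↦ i c_{y,j}c_{z,j}, Y_j ↦ i c_{x,j}c_{z,j}, Z_j ↦ i c_{x,j}c_{y,j}. Then H is unitarily equivalent to H_qb ⊗ I where I acts on an auxiliary space of dimension 2^{n/2}; in particular H has the same spectrum as H_qb with each eigenvalue's multiplicity multiplied by 2^{n/2}. -/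
open Matrix
open scoped Kronecker

/-- The Pauli string `∏_j P_{a_j, j}` (ordered product; `0 ↦ I`, `1 ↦ X_j`, `2 ↦ Y_j`,
`3 ↦ Z_j`). -/
noncomputable def pauliString {n D : ℕ} (X Y Z : Fin n → Matrix (Fin D) (Fin D) ℂ)
    (a : Fin n → Fin 4) : Matrix (Fin D) (Fin D) ℂ :=
  ((List.finRange n).map fun j =>
    if a j = 1 then X j else if a j = 2 then Y j else if a j = 3 then Z j else 1).prod

/-- The fermionic image of a Pauli string under
`X_j ↦ i c_{y,j}c_{z,j}`, `Y_j ↦ i c_{x,j}c_{z,j}`, `Z_j ↦ i c_{x,j}c_{y,j}`,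
where `cc j 0 = c_{x,j}`, `cc j 1 = c_{y,j}`, `cc j 2 = c_{z,j}`. -/
noncomputable def fermiString {n D : ℕ} (cc : Fin n → Fin 3 → Matrix (Fin D) (Fin D) ℂ)
    (a : Fin n → Fin 4) : Matrix (Fin D) (Fin D) ℂ :=
  ((List.finRange n).map fun j =>
    if a j = 1 then Complex.I • (cc j 1 * cc j 2)
    else if a j = 2 then Complex.I • (cc j 0 * cc j 2)
    else if a j = 3 then Complex.I • (cc j 0 * cc j 1) else 1).prod

set_option linter.unusedSectionVars false
set_option maxHeartbeats 800000

open Matrix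
open scoped Kronecker symmDiff

section ListHelpers

variable {M : Type*} [Ring M] {ι : Type*} [DecidableEq ι]

lemma listprod_mul_listprod (f g : ι → M)
    (hfg : ∀ j k, j ≠ k → Commute (g j) (f k)) :
    ∀ (l : List ι), l.Nodup →
      (l.map f).prod * (l.map g).prod = (l.map (fun j => f j * g j)).prod := by
  intro l
  induction l with
  | nil => simp
  | cons a l ih =>
    intro h
    rcases List.nodup_cons.mp h with ⟨ha, hl⟩
    have hcomm : Commute (g a) ((l.map f).prod) := by
      apply Commute.list_prod_right
      intro x hx
      rcases List.mem_map.mp hx with ⟨k, hk, rfl⟩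
      exact hfg a k (fun hak => ha (hak ▸ hk))
    simp only [List.map_cons, List.prod_cons]
    calc f a * (l.map f).prod * (g a * (l.map g).prod)
        = f a * ((l.map f).prod * g a) * (l.map g).prod := by simp only [mul_assoc]
      _ = f a * (g a * (l.map f).prod) * (l.map g).prod := by rw [hcomm.eq]
      _ = (f a * g a) * ((l.map f).prod * (l.map g).prod) := by rw [mul_assoc, mul_assoc, mul_assoc]
      _ = (f a * g a) * (l.map (fun j => f j * g j)).prod := by rw [ih hl]

lemma listprod_extract (f : ι → M) :
    ∀ (l : List ι) (j : ι), j ∈ l →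
      (∀ k ∈ l, k ≠ j → Commute (f j) (f k)) →
      (l.map f).prod = f j * ((l.erase j).map f).prod := by
  intro l
  induction l with
  | nil => intro j h; simp at h
  | cons a l ih =>
    intro j hj hc
    by_cases haj : a = j
    · subst haj; simp
    · have hj' : j ∈ l := by
        rcases List.mem_cons.mp hj with h | h
        · exact absurd h.symm haj
        · exact h
      have hcomm : Commute (f j) (f a) := hc a (List.mem_cons_self) haj
      rw [List.erase_cons_tail (by simpa using (fun h : a = j => haj h))]
      simp only [List.map_cons, List.prod_cons]
      rw [ih j hj' (fun k hk hkj => hc k (List.mem_cons_of_mem a hk) hkj), ← mul_assoc,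
        ← hcomm.eq, mul_assoc]

lemma listprod_commute (f : ι → M) (y : M) (l : List ι)
    (h : ∀ k ∈ l, Commute y (f k)) : Commute y ((l.map f).prod) := by
  apply Commute.list_prod_right
  intro x hx
  rcases List.mem_map.mp hx with ⟨k, hk, rfl⟩
  exact h k hk

lemma listprod_star {M : Type*} [Ring M] [StarRing M] (f : ι → M) :
    ∀ (l : List ι), (∀ j ∈ l, star (f j) = f j) →
      (∀ j ∈ l, ∀ k ∈ l, j ≠ k → Commute (f j) (f k)) →
      star ((l.map f).prod) = (l.map f).prod := by
  intro l
  induction l with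
  | nil => simp
  | cons a l ih =>
    intro hh hc
    simp only [List.map_cons, List.prod_cons, StarMul.star_mul]
    rw [ih (fun j hj => hh j (List.mem_cons_of_mem a hj))
      (fun j hj k hk hjk => hc j (List.mem_cons_of_mem a hj) k (List.mem_cons_of_mem a hk) hjk),
      hh a (List.mem_cons_self)]
    have : Commute (f a) ((l.map f).prod) := by
      apply listprod_commute
      intro k hk
      by_cases hak : a = k
      · subst hak; exact Commute.refl _
      · exact hc a (List.mem_cons_self) k (List.mem_cons_of_mem a hk) hak
    exact this.symm.eq

end ListHelpers

/-- ordered product of `X j` over `j ∈ t`, along the list `l`. -/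
noncomputable def XP {n D : ℕ} (X : Fin n → Matrix (Fin D) (Fin D) ℂ)
    (l : List (Fin n)) (t : Finset (Fin n)) : Matrix (Fin D) (Fin D) ℂ :=
  (l.map fun j => if j ∈ t then X j else 1).prod

/-- ordered product of the projectors `(1+Z j)/2` along `l`. -/
noncomputable def Pm {n D : ℕ} (Z : Fin n → Matrix (Fin D) (Fin D) ℂ)
    (l : List (Fin n)) : Matrix (Fin D) (Fin D) ℂ :=
  (l.map fun j => (2⁻¹ : ℂ) • (1 + Z j)).prod

section PauliAlg
variable {n D : ℕ} (X Z : Fin n → Matrix (Fin D) (Fin D) ℂ)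
variable (hXherm : ∀ j, (X j).IsHermitian) (hZherm : ∀ j, (Z j).IsHermitian)
    (hX2 : ∀ j, X j * X j = 1) (hZ2 : ∀ j, Z j * Z j = 1)
    (hXZ : ∀ j, X j * Z j = -(Z j * X j))
    (hXX : ∀ j k, j ≠ k → X j * X k = X k * X j)
    (hZZ : ∀ j k, j ≠ k → Z j * Z k = Z k * Z j)
    (hXZcomm : ∀ j k, j ≠ k → X j * Z k = Z k * X j)

lemma ZX_anti (hXZ : ∀ j, X j * Z j = -(Z j * X j)) :
    ∀ j, Z j * X j = -(X j * Z j) := fun j => by rw [hXZ j, neg_neg]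

include hXX in
lemma XP_mul (l : List (Fin n)) (hl : l.Nodup) (s t : Finset (Fin n)) (hX2 : ∀ j, X j * X j = 1) :
    XP X l s * XP X l t = XP X l (symmDiff s t) := by
  unfold XP
  rw [listprod_mul_listprod _ _ (fun j k hjk => ?_) l hl]
  · congr 1
    apply List.map_congr_left
    intro j _
    by_cases hs : j ∈ s <;> by_cases ht : j ∈ t <;>
      simp [hs, ht, Finset.mem_symmDiff, hX2 j]
  · by_cases hs : j ∈ t <;> by_cases ht : k ∈ s <;>
      simp only [hs, ht, if_true, if_false]
    · exact (hXX j k hjk)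
    · exact Commute.one_right _
    · exact Commute.one_left _
    · exact Commute.one_left _

lemma XP_empty (l : List (Fin n)) : XP X l ∅ = 1 := by
  unfold XP
  apply List.prod_eq_one
  intro x hx
  rcases List.mem_map.mp hx with ⟨k, _, rfl⟩
  simp

include hXX in
lemma XP_extract (l : List (Fin n)) (j : Fin n) (hj : j ∈ l) :
    XP X l t = (if j ∈ t then X j else 1) * XP X (l.erase j) t := by
  unfold XP
  exact listprod_extract _ l j hj (fun k hk hkj => by
    by_cases h1 : j ∈ t <;> by_cases h2 : k ∈ t <;>
      simp only [h1, h2, if_true, if_false]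
    · exact (hXX j k (fun h => hkj h.symm))
    · exact Commute.one_right _
    · exact Commute.one_left _
    · exact Commute.one_left _)

include hXX in
lemma XP_single (l : List (Fin n)) (hl : l.Nodup) (j : Fin n) (hj : j ∈ l) :
    XP X l {j} = X j := by
  rw [XP_extract X hXX l j hj]
  simp only [Finset.mem_singleton, if_pos rfl]
  have : XP X (l.erase j) {j} = 1 := by
    unfold XP
    apply List.prod_eq_one
    intro x hx
    rcases List.mem_map.mp hx with ⟨k, hk, rfl⟩
    have : k ≠ j := (List.Nodup.mem_erase_iff hl).mp hk |>.1
    simp [this]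
  rw [this, mul_one]
  simp

include hXZcomm in
lemma Z_comm_XP (j : Fin n) (t : Finset (Fin n)) (l : List (Fin n)) (h : j ∈ t → j ∉ l) :
    Commute (Z j) (XP X l t) := by
  apply listprod_commute
  intro k hk
  by_cases hkt : k ∈ t
  · simp only [hkt, if_true]
    have hkj : k ≠ j := fun hkj => (h (hkj ▸ hkt)) (hkj ▸ hk)
    exact (hXZcomm k j hkj).symm
  · simp only [hkt, if_false]; exact Commute.one_right _

include hXX hXZcomm hXZ in
lemma Z_anti_XP (l : List (Fin n)) (hl : l.Nodup) (j : Fin n) (hj : j ∈ l)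
    (t : Finset (Fin n)) (hjt : j ∈ t) :
    Z j * XP X l t = -(XP X l t * Z j) := by
  rw [XP_extract X hXX l j hj]
  simp only [hjt, if_true]
  have hcomm : Commute (Z j) (XP X (l.erase j) t) := by
    apply Z_comm_XP X Z hXZcomm
    intro _
    exact fun hmem => ((List.Nodup.mem_erase_iff hl).mp hmem).1 rfl
  calc Z j * (X j * XP X (l.erase j) t)
      = (Z j * X j) * XP X (l.erase j) t := by rw [mul_assoc]
    _ = -((X j * Z j) * XP X (l.erase j) t) := by rw [ZX_anti X Z hXZ j, neg_mul]
    _ = -(X j * (Z j * XP X (l.erase j) t)) := by rw [mul_assoc]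
    _ = -(X j * (XP X (l.erase j) t * Z j)) := by rw [hcomm.eq]
    _ = -(X j * XP X (l.erase j) t * Z j) := by rw [mul_assoc]

include hXX in
lemma X_comm_XP (a : Fin n) (t : Finset (Fin n)) (l : List (Fin n)) (h : a ∉ l) :
    Commute (X a) (XP X l t) := by
  apply listprod_commute
  intro k hk
  by_cases hkt : k ∈ t
  · simp only [hkt, if_true]
    exact (hXX a k (fun hak => h (hak ▸ hk)))
  · simp only [hkt, if_false]; exact Commute.one_right _

include hZZ in
lemma Zf_comm (j k : Fin n) (hjk : j ≠ k) :
    Commute ((2⁻¹ : ℂ) • (1 + Z j)) ((2⁻¹ : ℂ) • (1 + Z k)) := by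
  apply Commute.smul_left
  apply Commute.smul_right
  exact Commute.add_left (Commute.one_left _)
    (Commute.add_right (Commute.one_right _) ((hZZ j k hjk)))

include hXZcomm in
lemma X_comm_Pm (a : Fin n) (l : List (Fin n)) (h : a ∉ l) :
    Commute (X a) (Pm Z l) := by
  apply listprod_commute
  intro k hk
  apply Commute.smul_right
  exact Commute.add_right (Commute.one_right _)
    ((hXZcomm a k (fun hak => h (hak ▸ hk))))

include hZZ in
lemma Z_comm_Pm (j : Fin n) (l : List (Fin n)) (h : j ∉ l) :
    Commute (Z j) (Pm Z l) := by
  apply listprod_commute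
  intro k hk
  apply Commute.smul_right
  exact Commute.add_right (Commute.one_right _)
    ((hZZ j k (fun hjk => h (hjk ▸ hk))))

include hZZ hZ2 in
lemma Pm_idem (l : List (Fin n)) (hl : l.Nodup) : Pm Z l * Pm Z l = Pm Z l := by
  unfold Pm
  rw [listprod_mul_listprod _ _ (fun j k hjk => Zf_comm Z hZZ j k hjk) l hl]
  congr 1
  apply List.map_congr_left
  intro j _
  rw [smul_mul_smul_comm]
  have h2 : (1 + Z j) * (1 + Z j) = (2 : ℂ) • (1 + Z j) := by
    have := hZ2 j
    rw [two_smul, mul_add, add_mul, add_mul, this]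
    simp only [one_mul, mul_one]
    abel
  rw [h2, smul_smul]
  norm_num

include hZherm hZZ in
lemma Pm_star (l : List (Fin n)) (hl : l.Nodup) : star (Pm Z l) = Pm Z l := by
  unfold Pm
  apply listprod_star
  · intro j _
    rw [star_smul, star_add, star_one]
    have : star (Z j) = Z j := hZherm j
    rw [this]
    norm_num
  · intro j _ k _ hjk
    exact Zf_comm Z hZZ j k hjk

include hXherm hXX in
lemma XP_star (l : List (Fin n)) (hl : l.Nodup) (t : Finset (Fin n)) :
    star (XP X l t) = XP X l t := by
  unfold XP
  apply listprod_star
  · intro j _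
    by_cases hj : j ∈ t
    · simp only [hj, if_true]; exact hXherm j
    · simp only [hj, if_false]; exact star_one _
  · intro j _ k _ hjk
    by_cases h1 : j ∈ t <;> by_cases h2 : k ∈ t <;>
      simp only [h1, h2, if_true, if_false]
    · exact (hXX j k hjk)
    · exact Commute.one_right _
    · exact Commute.one_left _
    · exact Commute.one_left _

include hZZ hZ2 in
lemma Z_mul_Pm (l : List (Fin n)) (hl : l.Nodup) (j : Fin n) (hj : j ∈ l) :
    Z j * Pm Z l = Pm Z l := by
  unfold Pm
  rw [listprod_extract _ l j hj (fun k hk hkj => Zf_comm Z hZZ j k (fun h => hkj h.symm))]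
  rw [← mul_assoc]
  congr 1
  rw [mul_smul_comm, mul_add, mul_one, hZ2 j, add_comm (Z j) 1]

include hZZ hZ2 in
lemma Pm_mul_Z (l : List (Fin n)) (hl : l.Nodup) (j : Fin n) (hj : j ∈ l) :
    Pm Z l * Z j = Pm Z l := by
  unfold Pm
  rw [listprod_extract _ l j hj (fun k hk hkj => Zf_comm Z hZZ j k (fun h => hkj h.symm))]
  have hcomm : Commute (Z j) (((l.erase j).map fun k => (2⁻¹ : ℂ) • (1 + Z k)).prod) := by
    apply listprod_commute
    intro k hk
    apply Commute.smul_right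
    exact Commute.add_right (Commute.one_right _)
      ((hZZ j k (((List.Nodup.mem_erase_iff hl).mp hk).1.symm)))
  rw [mul_assoc, ← hcomm.eq, ← mul_assoc]
  congr 1
  rw [smul_mul_assoc, add_mul, one_mul, hZ2 j, add_comm (Z j) 1]

include hXX hXZ hXZcomm hZZ hZ2 in
lemma Pm_XP_Pm (l : List (Fin n)) (hl : l.Nodup) (t : Finset (Fin n)) (ht : t.Nonempty)
    (htl : ∀ j ∈ t, j ∈ l) :
    Pm Z l * XP X l t * Pm Z l = 0 := by
  obtain ⟨j, hjt⟩ := ht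
  have hjl : j ∈ l := htl j hjt
  have key : Pm Z l * XP X l t * Pm Z l = -(Pm Z l * XP X l t * Pm Z l) := by
    calc Pm Z l * XP X l t * Pm Z l
        = Pm Z l * XP X l t * (Z j * Pm Z l) := by rw [Z_mul_Pm Z hZ2 hZZ l hl j hjl]
      _ = Pm Z l * (XP X l t * Z j) * Pm Z l := by rw [mul_assoc, mul_assoc, mul_assoc]
      _ = Pm Z l * (-(Z j * XP X l t)) * Pm Z l := by
            have := Z_anti_XP X Z hXZ hXX hXZcomm l hl j hjl t hjt
            rw [eq_comm, neg_eq_iff_eq_neg] at this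
            rw [← this]
      _ = -((Pm Z l * Z j) * XP X l t * Pm Z l) := by
            simp only [mul_neg, neg_inj]
            noncomm_ring
      _ = -(Pm Z l * XP X l t * Pm Z l) := by rw [Pm_mul_Z Z hZ2 hZZ l hl j hjl]
  have h2 : (2 : ℂ) • (Pm Z l * XP X l t * Pm Z l) = 0 := by
    rw [two_smul]
    nth_rewrite 1 [key]
    abel
  have := smul_eq_zero.mp h2
  rcases this with h | h
  · norm_num at h
  · exact h

include hXX hXZ hXZcomm hZZ hZ2 hX2 in
lemma sum_XP_Pm_XP : ∀ (l : List (Fin n)), l.Nodup →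
    ∑ t ∈ l.toFinset.powerset, XP X l t * Pm Z l * XP X l t = 1 := by
  intro l
  induction l with
  | nil =>
    intro _
    simp [XP, Pm]
  | cons a l ih =>
    intro hnd
    rcases List.nodup_cons.mp hnd with ⟨ha, hl⟩
    have ha' : a ∉ l.toFinset := by simpa using ha
    have hdisj : Disjoint l.toFinset.powerset (l.toFinset.powerset.image (insert a)) := by
      rw [Finset.disjoint_left]
      intro u hu hu'
      rcases Finset.mem_image.mp hu' with ⟨t, _, rfl⟩
      exact ha' (Finset.mem_powerset.mp hu (Finset.mem_insert_self a t))
    have hinj : ∀ t ∈ l.toFinset.powerset, ∀ t' ∈ l.toFinset.powerset,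
        insert a t = insert a t' → t = t' := by
      intro t ht t' ht' h
      have hat : a ∉ t := fun hc => ha' (Finset.mem_powerset.mp ht hc)
      have hat' : a ∉ t' := fun hc => ha' (Finset.mem_powerset.mp ht' hc)
      have := congrArg (fun u => Finset.erase u a) h
      simpa [Finset.erase_insert hat, Finset.erase_insert hat'] using this
    rw [List.toFinset_cons, Finset.powerset_insert, Finset.sum_union hdisj,
      Finset.sum_image hinj, ← Finset.sum_add_distrib]
    rw [← ih hl]
    apply Finset.sum_congr rfl
    intro t ht
    have hat : a ∉ t := fun hc => ha' (Finset.mem_powerset.mp ht hc)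
    -- unfold the cons products
    have hXPt : XP X (a :: l) t = XP X l t := by
      simp [XP, hat]
    have hXPt' : XP X (a :: l) (insert a t) = X a * XP X l t := by
      have : XP X l (insert a t) = XP X l t := by
        unfold XP
        congr 1
        apply List.map_congr_left
        intro j hj
        have hja : j ≠ a := fun h => ha (h ▸ hj)
        simp [Finset.mem_insert, hja]
      simp only [XP, List.map_cons, List.prod_cons, Finset.mem_insert_self, if_true]
      exact congrArg (X a * ·) this
    have hPm : Pm Z (a :: l) = (2⁻¹ : ℂ) • (1 + Z a) * Pm Z l := by simp [Pm]
    rw [hXPt, hXPt', hPm]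
    set fz := (2⁻¹ : ℂ) • (1 + Z a) with hfz
    set A := X a with hA
    set L := XP X l t with hL
    set Q := Pm Z l with hQ
    have cX : A * L = L * A := (X_comm_XP X hXX a t l ha).eq
    have cP : A * Q = Q * A := (X_comm_Pm X Z hXZcomm a l ha).eq
    have hg : A * fz * A = (2⁻¹ : ℂ) • (1 - Z a) := by
      rw [hfz, hA, mul_smul_comm, smul_mul_assoc]
      congr 1
      rw [mul_add, mul_one, add_mul, hX2 a, hXZ a, neg_mul, mul_assoc, hX2 a, mul_one]
      rw [sub_eq_add_neg]
    have hsum : fz + A * fz * A = 1 := by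
      rw [hg, hfz, ← smul_add]
      have : (1 + Z a) + (1 - Z a) = (2 : ℂ) • 1 := by module
      rw [this, smul_smul]
      norm_num
    have e1 : A * L * (fz * Q) * (A * L) = A * L * fz * (Q * A) * L := by noncomm_ring
    have e2 : A * L * fz * (Q * A) * L = L * (A * fz * A) * Q * L := by
      rw [← cP, cX]
      noncomm_ring
    calc L * (fz * Q) * L + A * L * (fz * Q) * (A * L)
        = L * (fz * Q) * L + L * (A * fz * A) * Q * L := by rw [e1, e2]
      _ = L * ((fz + A * fz * A) * Q) * L := by noncomm_ring
      _ = L * Q * L := by rw [hsum, one_mul]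

end PauliAlg

/-! ### Standard Pauli matrices on the Finset index space -/

noncomputable def sX (n : ℕ) (j : Fin n) : Matrix (Finset (Fin n)) (Finset (Fin n)) ℂ :=
  Matrix.of fun s t => if s = symmDiff t {j} then 1 else 0

noncomputable def sZ (n : ℕ) (j : Fin n) : Matrix (Finset (Fin n)) (Finset (Fin n)) ℂ :=
  Matrix.diagonal fun s => if j ∈ s then (-1 : ℂ) else 1

lemma mul_vecMulVec_mul {D : ℕ} (A : Matrix (Fin D) (Fin D) ℂ) (w v : Fin D → ℂ)
    (B : Matrix (Fin D) (Fin D) ℂ) :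
    A * vecMulVec w v * B = vecMulVec (A *ᵥ w) (v ᵥ* B) := by
  ext i i'
  simp only [Matrix.mul_apply, vecMulVec_apply, Matrix.mulVec, Matrix.vecMul,
    dotProduct, Finset.sum_mul, Finset.mul_sum]
  apply Finset.sum_congr rfl
  intro a _
  apply Finset.sum_congr rfl
  intro c _
  ring

lemma pauli_classify {n D : ℕ} (X Z : Fin n → Matrix (Fin D) (Fin D) ℂ)
    (hXherm : ∀ j, (X j).IsHermitian) (hZherm : ∀ j, (Z j).IsHermitian)
    (hX2 : ∀ j, X j * X j = 1) (hZ2 : ∀ j, Z j * Z j = 1)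
    (hXZ : ∀ j, X j * Z j = -(Z j * X j))
    (hXX : ∀ j k, j ≠ k → X j * X k = X k * X j)
    (hZZ : ∀ j k, j ≠ k → Z j * Z k = Z k * Z j)
    (hXZcomm : ∀ j k, j ≠ k → X j * Z k = Z k * X j) :
    ∃ (r : ℕ) (V : Matrix (Fin D) (Finset (Fin n) × Fin r) ℂ),
      Vᴴ * V = 1 ∧ V * Vᴴ = 1 ∧
      (∀ j, X j * V = V * (sX n j ⊗ₖ (1 : Matrix (Fin r) (Fin r) ℂ))) ∧
      (∀ j, Z j * V = V * (sZ n j ⊗ₖ (1 : Matrix (Fin r) (Fin r) ℂ))) := by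
  classical
  set l : List (Fin n) := List.finRange n with hldef
  have hl : l.Nodup := List.nodup_finRange n
  have hmem : ∀ j : Fin n, j ∈ l := fun j => List.mem_finRange j
  set P : Matrix (Fin D) (Fin D) ℂ := Pm Z l with hPdef
  have hPP : P * P = P := Pm_idem Z hZ2 hZZ l hl
  have hPstar : star P = P := Pm_star Z hZherm hZZ l hl
  have hPct : Pᴴ = P := hPstar
  -- the fixed subspace of P
  let S : Submodule ℂ (EuclideanSpace ℂ (Fin D)) :=
    { carrier := {x | P *ᵥ x = x}
      add_mem' := fun {x y} hx hy => by
        simp only [Set.mem_setOf_eq] at *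
        rw [WithLp.ofLp_add, Matrix.mulVec_add, hx, hy]
      zero_mem' := by simp only [Set.mem_setOf_eq, WithLp.ofLp_zero, Matrix.mulVec_zero]
      smul_mem' := fun c {x} hx => by
        simp only [Set.mem_setOf_eq] at *
        rw [WithLp.ofLp_smul, Matrix.mulVec_smul, hx] }
  set r := Module.finrank ℂ S with hrdef
  set OB := stdOrthonormalBasis ℂ S with hOBdef
  set b : Fin r → (Fin D → ℂ) := fun k => ((OB k : S) : EuclideanSpace ℂ (Fin D)) with hbdef
  have hbfix : ∀ k, P *ᵥ b k = b k := fun k => (OB k).2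
  have hborth : ∀ k m, star (b k) ⬝ᵥ b m = if k = m then 1 else 0 := by
    intro k m
    have h1 := orthonormal_iff_ite.mp OB.orthonormal k m
    rw [Submodule.coe_inner] at h1
    rw [← h1]
    exact ((EuclideanSpace.inner_eq_star_dotProduct _ _).trans (dotProduct_comm _ _)).symm
  -- expansion of P in terms of the orthonormal family
  have hrep : ∀ k (x : Fin D → ℂ), star (b k) ⬝ᵥ (P *ᵥ x) = star (b k) ⬝ᵥ x := by
    intro k x
    rw [Matrix.dotProduct_mulVec]
    have : star (b k) ᵥ* P = star (b k) := by
      conv_lhs => rw [← hPct]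
      rw [← Matrix.star_mulVec, hbfix k]
    rw [this]
  have hexp : ∀ x : Fin D → ℂ, P *ᵥ x = ∑ k, (star (b k) ⬝ᵥ x) • b k := by
    intro x
    have hy : P *ᵥ (P *ᵥ x) = P *ᵥ x := by rw [Matrix.mulVec_mulVec, hPP]
    set ys : S := ⟨WithLp.toLp 2 (P *ᵥ x), hy⟩ with hys
    have h1 := OB.sum_repr ys
    have h2 : ∀ k, OB.repr ys k = star (b k) ⬝ᵥ x := by
      intro k
      rw [OB.repr_apply_apply, Submodule.coe_inner]
      have h0 : (inner (𝕜 := ℂ) ((OB k : S) : EuclideanSpace ℂ (Fin D))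
          ((ys : S) : EuclideanSpace ℂ (Fin D))) = star (b k) ⬝ᵥ (P *ᵥ x) :=
          (EuclideanSpace.inner_eq_star_dotProduct _ _).trans (dotProduct_comm _ _)
      rw [h0, hrep]
    have h3 := congrArg (Subtype.val) h1
    rw [Submodule.coe_sum] at h3
    simp only [Submodule.coe_smul] at h3
    simp only [h2] at h3
    have h4 := congrArg WithLp.ofLp h3
    rw [WithLp.ofLp_sum] at h4
    simp only [WithLp.ofLp_smul] at h4
    exact h4.symm
  have hout : ∑ k, vecMulVec (b k) (star (b k)) = P := by
    apply Matrix.ext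
    intro i j
    have h1 : P i j = (P *ᵥ Pi.single j 1) i := by simp [Matrix.mulVec_single]
    rw [h1, hexp]
    simp only [Finset.sum_apply, Pi.smul_apply, smul_eq_mul, Matrix.sum_apply]
    apply Finset.sum_congr rfl
    intro k _
    rw [vecMulVec_apply, dotProduct_single, mul_one]
    exact mul_comm _ _
  -- the intertwiner
  set V : Matrix (Fin D) (Finset (Fin n) × Fin r) ℂ :=
    Matrix.of (fun i sk => ((XP X l sk.1) *ᵥ (b sk.2)) i) with hVdef
  have hVcol : ∀ (A : Matrix (Fin D) (Fin D) ℂ) i (sk : Finset (Fin n) × Fin r),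
      (A * V) i sk = ((A * XP X l sk.1) *ᵥ (b sk.2)) i := by
    intro A i sk
    rw [← Matrix.mulVec_mulVec]
    simp [hVdef, Matrix.mul_apply, Matrix.mulVec, dotProduct]
  have hXPct : ∀ s, (XP X l s)ᴴ = XP X l s := fun s => XP_star X hXherm hXX l hl s
  refine ⟨r, V, ?_, ?_, ?_, ?_⟩
  · -- Vᴴ * V = 1
    ext ⟨s, k⟩ ⟨t, m⟩
    rw [Matrix.mul_apply]
    have hentry : ∀ i, Vᴴ (s, k) i * V i (t, m)
        = star ((XP X l s *ᵥ b k) i) * ((XP X l t *ᵥ b m) i) := by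
      intro i; rw [Matrix.conjTranspose_apply]; rfl
    simp only [hentry]
    have hdot : ∑ i, star ((XP X l s *ᵥ b k) i) * ((XP X l t *ᵥ b m) i)
        = star (XP X l s *ᵥ b k) ⬝ᵥ (XP X l t *ᵥ b m) := rfl
    rw [hdot, Matrix.star_mulVec, hXPct s, ← Matrix.dotProduct_mulVec,
      Matrix.mulVec_mulVec, XP_mul X hXX l hl s t hX2]
    by_cases hst : s = t
    · subst hst
      rw [symmDiff_self]
      have : XP X l (⊥ : Finset (Fin n)) = 1 := XP_empty X l
      rw [this, Matrix.one_mulVec, hborth k m, Matrix.one_apply]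
      by_cases hkm : k = m
      · subst hkm; simp
      · simp [hkm, Prod.ext_iff]
    · have hne : symmDiff s t ≠ ∅ := fun h => hst (symmDiff_eq_bot.mp h)
      have hnonempty : (symmDiff s t).Nonempty := Finset.nonempty_iff_ne_empty.mpr hne
      have hPXP : P * XP X l (symmDiff s t) * P = 0 := by
        rw [hPdef]
        exact Pm_XP_Pm X Z hZ2 hXZ hXX hZZ hXZcomm l hl _ hnonempty (fun j _ => hmem j)
      conv_lhs => rw [← hbfix m, ← hbfix k]
      rw [Matrix.mulVec_mulVec, Matrix.star_mulVec, hPct, ← Matrix.dotProduct_mulVec,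
        Matrix.mulVec_mulVec, ← mul_assoc, hPXP]
      rw [Matrix.zero_mulVec, dotProduct_zero, Matrix.one_apply]
      simp [Prod.ext_iff, hst]
  · -- V * Vᴴ = 1
    have key : V * Vᴴ = ∑ s : Finset (Fin n), XP X l s * P * XP X l s := by
      have step : ∀ s : Finset (Fin n),
          XP X l s * P * XP X l s
            = ∑ k, vecMulVec (XP X l s *ᵥ b k) (star (b k) ᵥ* XP X l s) := by
        intro s
        rw [← hout, Finset.mul_sum, Finset.sum_mul]
        apply Finset.sum_congr rfl
        intro k _
        rw [mul_vecMulVec_mul]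
      ext i i'
      rw [Matrix.mul_apply, Matrix.sum_apply]
      rw [Fintype.sum_prod_type]
      simp only [step, Matrix.sum_apply, vecMulVec_apply]
      apply Finset.sum_congr rfl
      intro s _
      apply Finset.sum_congr rfl
      intro k _
      rw [Matrix.conjTranspose_apply]
      have : star (V i' (s, k)) = (star (b k) ᵥ* XP X l s) i' := by
        have h1 : V i' (s, k) = (XP X l s *ᵥ b k) i' := rfl
        rw [h1, ← Pi.star_apply, Matrix.star_mulVec, hXPct s]
      rw [this]
      rfl
    rw [key]
    have huniv : l.toFinset = Finset.univ := by simp [hldef]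
    have := sum_XP_Pm_XP X Z hX2 hZ2 hXZ hXX hZZ hXZcomm l hl
    rw [huniv, Finset.powerset_univ] at this
    exact this
  · -- intertwining with X
    intro j
    ext i ⟨s, k⟩
    rw [hVcol]
    have hXXP : X j * XP X l s = XP X l (symmDiff s {j}) := by
      rw [← XP_single X hXX l hl j (hmem j), XP_mul X hXX l hl _ _ hX2, symmDiff_comm]
    rw [hXXP]
    have hRHS : (V * (sX n j ⊗ₖ (1 : Matrix (Fin r) (Fin r) ℂ))) i (s, k)
        = V i (symmDiff s {j}, k) := by
      rw [Matrix.mul_apply]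
      rw [Finset.sum_eq_single ((symmDiff s {j}), k)]
      · simp [sX, Matrix.one_apply]
      · rintro ⟨t, m⟩ _ hc
        simp only [Matrix.kroneckerMap_apply, sX, Matrix.of_apply, Matrix.one_apply]
        by_cases h1 : t = symmDiff s {j} <;> by_cases h2 : m = k <;>
          simp [h1, h2] at hc ⊢
      · intro h; exact absurd (Finset.mem_univ _) h
    rw [hRHS]
    rfl
  · -- intertwining with Z
    intro j
    ext i ⟨s, k⟩
    rw [hVcol]
    have hZb : Z j *ᵥ b k = b k := by
      conv_lhs => rw [← hbfix k]
      rw [Matrix.mulVec_mulVec, Z_mul_Pm Z hZ2 hZZ l hl j (hmem j)]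
      exact hbfix k
    have hRHS : (V * (sZ n j ⊗ₖ (1 : Matrix (Fin r) (Fin r) ℂ))) i (s, k)
        = (if j ∈ s then (-1 : ℂ) else 1) * V i (s, k) := by
      rw [Matrix.mul_apply]
      rw [Finset.sum_eq_single (s, k)]
      · simp only [Matrix.kroneckerMap_apply, sZ, Matrix.diagonal_apply_eq,
          Matrix.one_apply_eq, mul_one]
        rw [mul_comm]
      · rintro ⟨t, m⟩ _ hc
        simp only [Matrix.kroneckerMap_apply, sZ, Matrix.diagonal_apply, Matrix.one_apply]
        by_cases h1 : t = s <;> by_cases h2 : m = k <;>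
          simp [h1, h2] at hc ⊢
      · intro h; exact absurd (Finset.mem_univ _) h
    rw [hRHS]
    by_cases hjs : j ∈ s
    · have hanti : Z j * XP X l s = -(XP X l s * Z j) :=
        Z_anti_XP X Z hXZ hXX hXZcomm l hl j (hmem j) s hjs
      rw [hanti, if_pos hjs]
      have : (-(XP X l s * Z j)) *ᵥ b k = -((XP X l s * Z j) *ᵥ b k) := by
        rw [Matrix.neg_mulVec]
      rw [this, ← Matrix.mulVec_mulVec, hZb]
      simp only [Pi.neg_apply, neg_one_mul]
      rfl
    · have hcomm : Z j * XP X l s = XP X l s * Z j :=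
        (Z_comm_XP X Z hXZcomm j s l (fun h => absurd h hjs)).eq
      rw [hcomm, if_neg hjs, one_mul, ← Matrix.mulVec_mulVec, hZb]
      rfl

section MoreHelpers

variable {M : Type*} [Ring M]

lemma swap4 (a b c d : M) (hac : a*c = -(c*a)) (had : a*d = -(d*a))
    (hbc : b*c = -(c*b)) (hbd : b*d = -(d*b)) : (a*b)*(c*d) = (c*d)*(a*b) := by
  calc (a*b)*(c*d) = a*(b*c)*d := by noncomm_ring
    _ = a*(-(c*b))*d := by rw [hbc]
    _ = -(a*c*(b*d)) := by noncomm_ring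
    _ = -(a*c*(-(d*b))) := by rw [hbd]
    _ = (a*c)*(d*b) := by noncomm_ring
    _ = (-(c*a))*(d*b) := by rw [hac]
    _ = -(c*(a*d)*b) := by noncomm_ring
    _ = -(c*(-(d*a))*b) := by rw [had]
    _ = (c*d)*(a*b) := by noncomm_ring

lemma anti3 (a b c : M) (hab : a*b = -(b*a)) (hac : a*c = -(c*a))
    (hbc : b*c = -(c*b)) (hb2 : b*b = 1) : (b*c)*(a*b) = -(a*c) := by
  calc (b*c)*(a*b) = b*(c*a)*b := by noncomm_ring
    _ = b*(-(a*c))*b := by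
        have : c*a = -(a*c) := by rw [← neg_neg (c*a), ← hac]
        rw [this]
    _ = -((b*a)*(c*b)) := by noncomm_ring
    _ = -((b*a)*(-(b*c))) := by
        have : c*b = -(b*c) := by rw [← neg_neg (c*b), ← hbc]
        rw [this]
    _ = (b*a)*(b*c) := by noncomm_ring
    _ = (-(a*b))*(b*c) := by
        have : b*a = -(a*b) := by rw [← neg_neg (b*a), ← hab]
        rw [this]
    _ = -(a*(b*b)*c) := by noncomm_ring
    _ = -(a*c) := by rw [hb2, mul_one]

lemma pair_sq (A B : M) (hAB : A * B = -(B * A)) (hA2 : A*A = 1) (hB2 : B*B = 1) :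
    (A*B)*(A*B) = -1 := by
  calc (A*B)*(A*B) = A*(B*A)*B := by noncomm_ring
    _ = A*(-(A*B))*B := by
        have : B*A = -(A*B) := by rw [← neg_neg (B*A), ← hAB]
        rw [this]
    _ = -((A*A)*(B*B)) := by noncomm_ring
    _ = -1 := by rw [hA2, hB2, mul_one]

end MoreHelpers

lemma intertwine_listprod {D K : Type*} [Fintype D] [DecidableEq D] [Fintype K] [DecidableEq K]
    {r : ℕ} {ι : Type*} (F : ι → Matrix D D ℂ) (G : ι → Matrix K K ℂ)
    (V : Matrix D (K × Fin r) ℂ) :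
    ∀ (l : List ι), (∀ j ∈ l, F j * V = V * (G j ⊗ₖ (1 : Matrix (Fin r) (Fin r) ℂ))) →
      (l.map F).prod * V = V * ((l.map G).prod ⊗ₖ (1 : Matrix (Fin r) (Fin r) ℂ)) := by
  intro l
  induction l with
  | nil => intro _; simp [Matrix.one_kronecker_one]
  | cons a l ih =>
    intro h
    simp only [List.map_cons, List.prod_cons]
    rw [Matrix.mul_assoc, ih (fun j hj => h j (List.mem_cons_of_mem a hj)), ← Matrix.mul_assoc,
      h a (List.mem_cons_self), Matrix.mul_assoc, ← Matrix.mul_kronecker_mul, one_mul]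

lemma sum_kronecker_one {K : Type*} [Fintype K] {r : ℕ} {ι : Type*} (s : Finset ι)
    (f : ι → Matrix K K ℂ) :
    (∑ a ∈ s, f a) ⊗ₖ (1 : Matrix (Fin r) (Fin r) ℂ) = ∑ a ∈ s, f a ⊗ₖ (1 : Matrix (Fin r) (Fin r) ℂ) := by
  ext ⟨i, i'⟩ ⟨j, j'⟩
  simp [Matrix.kroneckerMap_apply, Finset.sum_apply, Matrix.sum_apply, Finset.sum_mul]

lemma kron_conjTranspose {K K' L L' : Type*} (A : Matrix K K' ℂ) (B : Matrix L L' ℂ) :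
    (A ⊗ₖ B)ᴴ = Aᴴ ⊗ₖ Bᴴ := by
  ext ⟨i, i'⟩ ⟨j, j'⟩
  simp [Matrix.conjTranspose_apply, Matrix.kroneckerMap_apply, mul_comm]

/-- standard Y -/
noncomputable def sY (n : ℕ) (j : Fin n) : Matrix (Finset (Fin n)) (Finset (Fin n)) ℂ :=
  Complex.I • (sX n j * sZ n j)

noncomputable def stdString (n : ℕ) (a : Fin n → Fin 4) :
    Matrix (Finset (Fin n)) (Finset (Fin n)) ℂ :=
  ((List.finRange n).map fun j =>
    if a j = 1 then sX n j else if a j = 2 then sY n j else if a j = 3 then sZ n j else 1).prod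

lemma string_conj {n D r : ℕ} (X Y Z : Fin n → Matrix (Fin D) (Fin D) ℂ)
    (hY : ∀ j, Y j = Complex.I • (X j * Z j))
    (V : Matrix (Fin D) (Finset (Fin n) × Fin r) ℂ)
    (hV2 : V * Vᴴ = 1)
    (hIX : ∀ j, X j * V = V * (sX n j ⊗ₖ (1 : Matrix (Fin r) (Fin r) ℂ)))
    (hIZ : ∀ j, Z j * V = V * (sZ n j ⊗ₖ (1 : Matrix (Fin r) (Fin r) ℂ)))
    (a : Fin n → Fin 4) :
    pauliString X Y Z a
      = V * (stdString n a ⊗ₖ (1 : Matrix (Fin r) (Fin r) ℂ)) * Vᴴ := by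
  have key : pauliString X Y Z a * V
      = V * (stdString n a ⊗ₖ (1 : Matrix (Fin r) (Fin r) ℂ)) := by
    unfold pauliString stdString
    apply intertwine_listprod
    intro j _
    by_cases h1 : a j = 1
    · rw [if_pos h1, if_pos h1]
      exact hIX j
    · by_cases h2 : a j = 2
      · rw [if_neg h1, if_neg h1, if_pos h2, if_pos h2]
        rw [hY j]
        unfold sY
        rw [Matrix.smul_mul, Matrix.mul_assoc, hIZ j, ← Matrix.mul_assoc, hIX j,
          Matrix.mul_assoc, ← Matrix.mul_kronecker_mul, one_mul,
          Matrix.smul_kronecker, Matrix.mul_smul]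
      · by_cases h3 : a j = 3
        · rw [if_neg h1, if_neg h1, if_neg h2, if_neg h2, if_pos h3, if_pos h3]
          exact hIZ j
        · rw [if_neg h1, if_neg h1, if_neg h2, if_neg h2, if_neg h3, if_neg h3]
          rw [Matrix.one_mul, Matrix.one_kronecker_one, Matrix.mul_one]
  calc pauliString X Y Z a = pauliString X Y Z a * (V * Vᴴ) := by rw [hV2, mul_one]
    _ = (pauliString X Y Z a * V) * Vᴴ := by rw [Matrix.mul_assoc]
    _ = V * (stdString n a ⊗ₖ (1 : Matrix (Fin r) (Fin r) ℂ)) * Vᴴ := by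
        rw [key]

section FermiHelpers
variable {D : ℕ}

lemma pairI_herm (A B : Matrix (Fin D) (Fin D) ℂ) (hA : A.IsHermitian) (hB : B.IsHermitian)
    (hAB : A*B = -(B*A)) : (Complex.I • (A*B)).IsHermitian := by
  show (Complex.I • (A*B))ᴴ = _
  rw [Matrix.conjTranspose_smul, Matrix.conjTranspose_mul, hB.eq, hA.eq]
  have hBA : B*A = -(A*B) := by rw [← neg_neg (B*A), ← hAB]
  rw [hBA, Complex.star_def, Complex.conj_I, smul_neg, neg_smul, neg_neg]

lemma pairI_sq (A B : Matrix (Fin D) (Fin D) ℂ) (hAB : A*B = -(B*A))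
    (hA2 : A*A = 1) (hB2 : B*B = 1) :
    (Complex.I • (A*B)) * (Complex.I • (A*B)) = 1 := by
  rw [smul_mul_smul_comm, Complex.I_mul_I, pair_sq A B hAB hA2 hB2]
  simp

lemma mid2 {M : Type*} [Ring M] (a b c : M) (hb2 : b*b = 1) : (a*b)*(b*c) = a*c := by
  calc (a*b)*(b*c) = a*(b*b)*c := by noncomm_ring
    _ = a*c := by rw [hb2, mul_one]

lemma smul_pair_comm (c : ℂ) (A B : Matrix (Fin D) (Fin D) ℂ) (h : A * B = B * A) :
    (c•A)*(c•B) = (c•B)*(c•A) := by rw [smul_mul_smul_comm, smul_mul_smul_comm, h]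

end FermiHelpers



/-- For even `n = 2p`, let `H_qb = Σ_a α_a P_a` be an `n`-qubit
Hamiltonian and let `H` be the `3n/2`-fermion Hamiltonian obtained by replacing each Pauli
factor via `X_j ↦ i c_{y,j}c_{z,j}`, `Y_j ↦ i c_{x,j}c_{z,j}`, `Z_j ↦ i c_{x,j}c_{y,j}`.
Then `H` is unitarily equivalent to `H_qb ⊗ I` with `I` on an auxiliary space of dimension
`2^{n/2}`; in particular `H` and `H_qb` have the same spectrum (with multiplicities of
`H_qb` multiplied by `2^{n/2}`). -/
theorem pauli_to_fermion_spectrum {p : ℕ}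
    (X Y Z : Fin (2 * p) → Matrix (Fin (2 ^ (2 * p))) (Fin (2 ^ (2 * p))) ℂ)
    (cc : Fin (2 * p) → Fin 3 → Matrix (Fin (2 ^ (3 * p))) (Fin (2 ^ (3 * p))) ℂ)
    -- Pauli relations
    (hXherm : ∀ j, (X j).IsHermitian) (hZherm : ∀ j, (Z j).IsHermitian)
    (hX2 : ∀ j, X j * X j = 1) (hZ2 : ∀ j, Z j * Z j = 1)
    (hXZ : ∀ j, X j * Z j = -(Z j * X j))
    (hY : ∀ j, Y j = Complex.I • (X j * Z j))
    (hXX : ∀ j k, j ≠ k → X j * X k = X k * X j)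
    (hZZ : ∀ j k, j ≠ k → Z j * Z k = Z k * Z j)
    (hXZcomm : ∀ j k, j ≠ k → X j * Z k = Z k * X j)
    -- Majorana relations for the 3n operators c_{x,j}, c_{y,j}, c_{z,j}
    (hccherm : ∀ j a, (cc j a).IsHermitian)
    (hcc2 : ∀ j a, cc j a * cc j a = 1)
    (hccanti : ∀ j a k b, (j, a) ≠ (k, b) → cc j a * cc k b = -(cc k b * cc j a))
    -- the Hamiltonians
    (α : (Fin (2 * p) → Fin 4) → ℂ)
    (Hqb : Matrix (Fin (2 ^ (2 * p))) (Fin (2 ^ (2 * p))) ℂ)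
    (Hf : Matrix (Fin (2 ^ (3 * p))) (Fin (2 ^ (3 * p))) ℂ)
    (hHqb : Hqb = ∑ a : Fin (2 * p) → Fin 4, α a • pauliString X Y Z a)
    (hHf : Hf = ∑ a : Fin (2 * p) → Fin 4, α a • fermiString cc a)
    (e : Fin (2 ^ (2 * p)) × Fin (2 ^ p) ≃ Fin (2 ^ (3 * p)))
    (he : e = finProdFinEquiv.trans (finCongr (by rw [← pow_add]; ring_nf))) :
    (∃ U ∈ Matrix.unitaryGroup (Fin (2 ^ (3 * p))) ℂ,
      Hf = U * (Matrix.reindex e e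
        (Hqb ⊗ₖ (1 : Matrix (Fin (2 ^ p)) (Fin (2 ^ p)) ℂ))) * star U) ∧
    spectrum ℂ Hf = spectrum ℂ Hqb := by
    classical
  -- fermionic single-qubit operators
  set X' : Fin (2 * p) → Matrix (Fin (2 ^ (3 * p))) (Fin (2 ^ (3 * p))) ℂ :=
    fun j => Complex.I • (cc j 1 * cc j 2) with hX'def
  set Y' : Fin (2 * p) → Matrix (Fin (2 ^ (3 * p))) (Fin (2 ^ (3 * p))) ℂ :=
    fun j => Complex.I • (cc j 0 * cc j 2) with hY'def
  set Z' : Fin (2 * p) → Matrix (Fin (2 ^ (3 * p))) (Fin (2 ^ (3 * p))) ℂ :=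
    fun j => Complex.I • (cc j 0 * cc j 1) with hZ'def
  have hne : ∀ (j : Fin (2 * p)) (a : Fin 3) (k : Fin (2 * p)) (b : Fin 3),
      (a ≠ b ∨ j ≠ k) → cc j a * cc k b = -(cc k b * cc j a) := by
    intro j a k b h
    apply hccanti
    intro hc
    rcases h with h | h
    · exact h (congrArg Prod.snd hc)
    · exact h (congrArg Prod.fst hc)
  have hfermi : fermiString cc = pauliString X' Y' Z' := rfl
  -- hypotheses for the fermionic side
  have hX'herm : ∀ j, (X' j).IsHermitian := fun j =>
    pairI_herm _ _ (hccherm j 1) (hccherm j 2) (hne j 1 j 2 (Or.inl (by decide)))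
  have hZ'herm : ∀ j, (Z' j).IsHermitian := fun j =>
    pairI_herm _ _ (hccherm j 0) (hccherm j 1) (hne j 0 j 1 (Or.inl (by decide)))
  have hX'2 : ∀ j, X' j * X' j = 1 := fun j =>
    pairI_sq _ _ (hne j 1 j 2 (Or.inl (by decide))) (hcc2 j 1) (hcc2 j 2)
  have hZ'2 : ∀ j, Z' j * Z' j = 1 := fun j =>
    pairI_sq _ _ (hne j 0 j 1 (Or.inl (by decide))) (hcc2 j 0) (hcc2 j 1)
  have hX'Z' : ∀ j, X' j * Z' j = -(Z' j * X' j) := by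
    intro j
    show (Complex.I • (cc j 1 * cc j 2)) * (Complex.I • (cc j 0 * cc j 1))
        = -((Complex.I • (cc j 0 * cc j 1)) * (Complex.I • (cc j 1 * cc j 2)))
    rw [smul_mul_smul_comm, smul_mul_smul_comm,
      anti3 (cc j 0) (cc j 1) (cc j 2) (hne j 0 j 1 (Or.inl (by decide)))
        (hne j 0 j 2 (Or.inl (by decide))) (hne j 1 j 2 (Or.inl (by decide))) (hcc2 j 1),
      mid2 (cc j 0) (cc j 1) (cc j 2) (hcc2 j 1)]
    rw [Complex.I_mul_I]
    simp
  have hY' : ∀ j, Y' j = Complex.I • (X' j * Z' j) := by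
    intro j
    show Complex.I • (cc j 0 * cc j 2)
        = Complex.I • ((Complex.I • (cc j 1 * cc j 2)) * (Complex.I • (cc j 0 * cc j 1)))
    rw [smul_mul_smul_comm, Complex.I_mul_I,
      anti3 (cc j 0) (cc j 1) (cc j 2) (hne j 0 j 1 (Or.inl (by decide)))
        (hne j 0 j 2 (Or.inl (by decide))) (hne j 1 j 2 (Or.inl (by decide))) (hcc2 j 1)]
    simp
  have hX'X' : ∀ j k, j ≠ k → X' j * X' k = X' k * X' j := by
    intro j k hjk
    apply smul_pair_comm
    exact swap4 _ _ _ _ (hne j 1 k 1 (Or.inr hjk)) (hne j 1 k 2 (Or.inr hjk))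
      (hne j 2 k 1 (Or.inr hjk)) (hne j 2 k 2 (Or.inr hjk))
  have hZ'Z' : ∀ j k, j ≠ k → Z' j * Z' k = Z' k * Z' j := by
    intro j k hjk
    apply smul_pair_comm
    exact swap4 _ _ _ _ (hne j 0 k 0 (Or.inr hjk)) (hne j 0 k 1 (Or.inr hjk))
      (hne j 1 k 0 (Or.inr hjk)) (hne j 1 k 1 (Or.inr hjk))
  have hX'Z'comm : ∀ j k, j ≠ k → X' j * Z' k = Z' k * X' j := by
    intro j k hjk
    apply smul_pair_comm
    exact swap4 _ _ _ _ (hne j 1 k 0 (Or.inr hjk)) (hne j 1 k 1 (Or.inr hjk))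
      (hne j 2 k 0 (Or.inr hjk)) (hne j 2 k 1 (Or.inr hjk))
  -- classify both representations
  obtain ⟨r₁, V₁, hV1a, hV1b, hIX1, hIZ1⟩ :=
    pauli_classify X Z hXherm hZherm hX2 hZ2 hXZ hXX hZZ hXZcomm
  obtain ⟨r₂, V₂, hV2a, hV2b, hIX2, hIZ2⟩ :=
    pauli_classify X' Z' hX'herm hZ'herm hX'2 hZ'2 hX'Z' hX'X' hZ'Z' hX'Z'comm
  -- cardinalities
  have hcard1 : 2 ^ (2 * p) * r₁ = 2 ^ (2 * p) := by
    have ht : Matrix.trace (V₁ᴴ * V₁) = Matrix.trace (V₁ * V₁ᴴ) := Matrix.trace_mul_comm _ _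
    rw [hV1a, hV1b, Matrix.trace_one, Matrix.trace_one] at ht
    have : (Fintype.card (Finset (Fin (2 * p)) × Fin r₁) : ℂ) = (Fintype.card (Fin (2 ^ (2 * p))) : ℂ) := by
      exact_mod_cast ht
    have hcn : Fintype.card (Finset (Fin (2 * p)) × Fin r₁) = Fintype.card (Fin (2 ^ (2 * p))) := by
      exact_mod_cast this
    simpa [Fintype.card_prod, Fintype.card_finset] using hcn
  have hcard2 : 2 ^ (2 * p) * r₂ = 2 ^ (3 * p) := by
    have ht : Matrix.trace (V₂ᴴ * V₂) = Matrix.trace (V₂ * V₂ᴴ) := Matrix.trace_mul_comm _ _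
    rw [hV2a, hV2b, Matrix.trace_one, Matrix.trace_one] at ht
    have hcn : Fintype.card (Finset (Fin (2 * p)) × Fin r₂) = Fintype.card (Fin (2 ^ (3 * p))) := by
      exact_mod_cast ht
    simpa [Fintype.card_prod, Fintype.card_finset] using hcn
  have hr1 : r₁ = 1 := by
    have h2n : 0 < 2 ^ (2 * p) := Nat.pow_pos (n := 2 * p) (by norm_num)
    exact Nat.eq_of_mul_eq_mul_left h2n (by rw [hcard1, mul_one])
  have hr2 : r₂ = 2 ^ p := by
    have h2n : 0 < 2 ^ (2 * p) := Nat.pow_pos (n := 2 * p) (by norm_num)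
    apply Nat.eq_of_mul_eq_mul_left h2n
    rw [hcard2, ← pow_add]
    congr 1
    ring
  -- the central matrix G
  set G : Matrix (Finset (Fin (2 * p))) (Finset (Fin (2 * p))) ℂ :=
    ∑ a : Fin (2 * p) → Fin 4, α a • stdString (2 * p) a with hGdef
  have hHqbV : Hqb = V₁ * (G ⊗ₖ (1 : Matrix (Fin r₁) (Fin r₁) ℂ)) * V₁ᴴ := by
    rw [hHqb, hGdef, sum_kronecker_one, Matrix.mul_sum, Matrix.sum_mul]
    apply Finset.sum_congr rfl
    intro a _
    rw [string_conj X Y Z hY V₁ hV1b hIX1 hIZ1 a, Matrix.smul_kronecker,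
      Matrix.mul_smul, Matrix.smul_mul]
  have hHfV : Hf = V₂ * (G ⊗ₖ (1 : Matrix (Fin r₂) (Fin r₂) ℂ)) * V₂ᴴ := by
    rw [hHf, hGdef, sum_kronecker_one, Matrix.mul_sum, Matrix.sum_mul]
    apply Finset.sum_congr rfl
    intro a _
    rw [hfermi, string_conj X' Y' Z' hY' V₂ hV2b hIX2 hIZ2 a, Matrix.smul_kronecker,
      Matrix.mul_smul, Matrix.smul_mul]
  -- build the combined unitary
  set g : Fin r₁ × Fin (2 ^ p) ≃ Fin r₂ :=
    Fintype.equivOfCardEq (by simp [hr1, hr2]) with hgdef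
  set h : ((Finset (Fin (2 * p)) × Fin r₁) × Fin (2 ^ p)) ≃ (Finset (Fin (2 * p)) × Fin r₂) :=
    (Equiv.prodAssoc _ _ _).trans (Equiv.prodCongr (Equiv.refl _) g) with hhdef
  have H1 : G ⊗ₖ (1 : Matrix (Fin r₂) (Fin r₂) ℂ)
      = ((G ⊗ₖ (1 : Matrix (Fin r₁) (Fin r₁) ℂ))
          ⊗ₖ (1 : Matrix (Fin (2 ^ p)) (Fin (2 ^ p)) ℂ)).submatrix h.symm h.symm := by
    ext ⟨s, k⟩ ⟨t, m⟩
    have hs : h.symm (s, k) = ((s, (g.symm k).1), (g.symm k).2) := rfl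
    have htm : h.symm (t, m) = ((t, (g.symm m).1), (g.symm m).2) := rfl
    simp only [Matrix.submatrix_apply, hs, htm, Matrix.kroneckerMap_apply]
    by_cases hkm : k = m
    · subst hkm
      simp [Matrix.one_apply]
    · have hginj : g.symm k ≠ g.symm m := fun hc => hkm (by
        have := congrArg g hc
        simpa using this)
      have hcases : (g.symm k).1 ≠ (g.symm m).1 ∨ (g.symm k).2 ≠ (g.symm m).2 := by
        by_contra hcon
        push_neg at hcon
        exact hginj (Prod.ext hcon.1 hcon.2)
      rcases hcases with h1 | h1 <;>
        simp [Matrix.one_apply, h1, hkm]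
  set B : Matrix (Fin (2 ^ (2 * p)) × Fin (2 ^ p))
      ((Finset (Fin (2 * p)) × Fin r₁) × Fin (2 ^ p)) ℂ :=
    V₁ ⊗ₖ (1 : Matrix (Fin (2 ^ p)) (Fin (2 ^ p)) ℂ) with hBdef
  set W : Matrix (Fin (2 ^ (3 * p))) (Finset (Fin (2 * p)) × Fin r₂) ℂ :=
    B.submatrix e.symm h.symm with hWdef
  have hWct : Wᴴ = ((V₁ᴴ ⊗ₖ (1 : Matrix (Fin (2 ^ p)) (Fin (2 ^ p)) ℂ))).submatrix h.symm e.symm := by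
    rw [hWdef, Matrix.conjTranspose_submatrix, hBdef, kron_conjTranspose,
      Matrix.conjTranspose_one]
  have hWW : Wᴴ * W = 1 := by
    rw [hWct, hWdef, Matrix.submatrix_mul_equiv, hBdef, ← Matrix.mul_kronecker_mul, hV1a,
      Matrix.one_mul, Matrix.one_kronecker_one, Matrix.submatrix_one_equiv]
  have hW2 : W * Wᴴ = 1 := by
    rw [hWdef, hWct, Matrix.submatrix_mul_equiv, hBdef, ← Matrix.mul_kronecker_mul, hV1b,
      Matrix.one_mul, Matrix.one_kronecker_one, Matrix.submatrix_one_equiv]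
  have hreq : (Matrix.reindex e e (Hqb ⊗ₖ (1 : Matrix (Fin (2 ^ p)) (Fin (2 ^ p)) ℂ)))
      = W * (G ⊗ₖ (1 : Matrix (Fin r₂) (Fin r₂) ℂ)) * Wᴴ := by
    rw [Matrix.reindex_apply, hHqbV]
    set C : Matrix ((Finset (Fin (2 * p)) × Fin r₁) × Fin (2 ^ p))
        ((Finset (Fin (2 * p)) × Fin r₁) × Fin (2 ^ p)) ℂ :=
      (G ⊗ₖ (1 : Matrix (Fin r₁) (Fin r₁) ℂ))
          ⊗ₖ (1 : Matrix (Fin (2 ^ p)) (Fin (2 ^ p)) ℂ) with hCdef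
    set Bt : Matrix ((Finset (Fin (2 * p)) × Fin r₁) × Fin (2 ^ p))
        (Fin (2 ^ (2 * p)) × Fin (2 ^ p)) ℂ :=
      V₁ᴴ ⊗ₖ (1 : Matrix (Fin (2 ^ p)) (Fin (2 ^ p)) ℂ) with hBtdef
    have hk : (V₁ * (G ⊗ₖ (1 : Matrix (Fin r₁) (Fin r₁) ℂ)) * V₁ᴴ)
          ⊗ₖ (1 : Matrix (Fin (2 ^ p)) (Fin (2 ^ p)) ℂ)
        = B * (C * Bt) := by
      rw [hBdef, hCdef, hBtdef]
      rw [← Matrix.mul_kronecker_mul, ← Matrix.mul_kronecker_mul, Matrix.one_mul,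
        Matrix.one_mul, Matrix.mul_assoc]
    rw [hk]
    have s1 : (B * (C * Bt)).submatrix e.symm e.symm
        = B.submatrix e.symm h.symm * (C * Bt).submatrix h.symm e.symm :=
      (Matrix.submatrix_mul_equiv B (C * Bt) e.symm h.symm e.symm).symm
    have s2 : (C * Bt).submatrix h.symm e.symm
        = C.submatrix h.symm h.symm * Bt.submatrix h.symm e.symm :=
      (Matrix.submatrix_mul_equiv C Bt h.symm h.symm e.symm).symm
    have H1' : C.submatrix (h.symm) (h.symm) = G ⊗ₖ (1 : Matrix (Fin r₂) (Fin r₂) ℂ) :=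
      H1.symm
    have hWt : Bt.submatrix (h.symm) (e.symm) = Wᴴ := hWct.symm
    rw [s1, s2, ← hWdef, H1', hWt, Matrix.mul_assoc]
  set U : Matrix (Fin (2 ^ (3 * p))) (Fin (2 ^ (3 * p))) ℂ := V₂ * Wᴴ with hUdef
  have hUct : star U = W * V₂ᴴ := by
    rw [Matrix.star_eq_conjTranspose, hUdef, Matrix.conjTranspose_mul,
      Matrix.conjTranspose_conjTranspose]
  have hWWx : ∀ (M : Matrix (Finset (Fin (2 * p)) × Fin r₂) (Fin (2 ^ (3 * p))) ℂ),
      Wᴴ * (W * M) = M := fun M => by rw [← Matrix.mul_assoc, hWW, Matrix.one_mul]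
  have hUU : U * star U = 1 := by
    rw [hUct, hUdef, Matrix.mul_assoc, ← Matrix.mul_assoc Wᴴ W _, hWW, Matrix.one_mul, hV2b]
  have hUU' : star U * U = 1 := by
    rw [hUct, hUdef, Matrix.mul_assoc, ← Matrix.mul_assoc V₂ᴴ V₂ _, hV2a, Matrix.one_mul, hW2]
  have hmain : Hf = U * (Matrix.reindex e e
      (Hqb ⊗ₖ (1 : Matrix (Fin (2 ^ p)) (Fin (2 ^ p)) ℂ))) * star U := by
    rw [hreq, hUct, hUdef]
    calc Hf = V₂ * (G ⊗ₖ (1 : Matrix (Fin r₂) (Fin r₂) ℂ)) * V₂ᴴ := hHfV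
      _ = V₂ * ((G ⊗ₖ (1 : Matrix (Fin r₂) (Fin r₂) ℂ)) * V₂ᴴ) := by rw [Matrix.mul_assoc]
      _ = V₂ * (Wᴴ * (W * ((G ⊗ₖ (1 : Matrix (Fin r₂) (Fin r₂) ℂ))
            * (Wᴴ * (W * V₂ᴴ))))) := by rw [hWWx, hWWx]
      _ = V₂ * Wᴴ * (W * (G ⊗ₖ (1 : Matrix (Fin r₂) (Fin r₂) ℂ)) * Wᴴ) * (W * V₂ᴴ) := by
          simp only [Matrix.mul_assoc]
  refine ⟨⟨U, Matrix.mem_unitaryGroup_iff.mpr hUU, hmain⟩, ?_⟩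
  -- spectra
  have hsp1 : spectrum ℂ Hf = spectrum ℂ (Matrix.reindex e e
      (Hqb ⊗ₖ (1 : Matrix (Fin (2 ^ p)) (Fin (2 ^ p)) ℂ))) := by
    let u : (Matrix (Fin (2 ^ (3 * p))) (Fin (2 ^ (3 * p))) ℂ)ˣ := ⟨U, star U, hUU, hUU'⟩
    have h0 : Hf = (u : Matrix (Fin (2 ^ (3 * p))) (Fin (2 ^ (3 * p))) ℂ) * (Matrix.reindex e e
        (Hqb ⊗ₖ (1 : Matrix (Fin (2 ^ p)) (Fin (2 ^ p)) ℂ)))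
        * ((u⁻¹ : (Matrix (Fin (2 ^ (3 * p))) (Fin (2 ^ (3 * p))) ℂ)ˣ)
            : Matrix (Fin (2 ^ (3 * p))) (Fin (2 ^ (3 * p))) ℂ) := hmain
    rw [h0, spectrum.units_conjugate]
  have hsp2 : spectrum ℂ (Matrix.reindex e e
      (Hqb ⊗ₖ (1 : Matrix (Fin (2 ^ p)) (Fin (2 ^ p)) ℂ)))
      = spectrum ℂ (Hqb ⊗ₖ (1 : Matrix (Fin (2 ^ p)) (Fin (2 ^ p)) ℂ)) := by
    have := AlgEquiv.spectrum_eq (Matrix.reindexAlgEquiv ℂ ℂ e)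
      (Hqb ⊗ₖ (1 : Matrix (Fin (2 ^ p)) (Fin (2 ^ p)) ℂ))
    simpa [Matrix.reindexAlgEquiv_apply] using this
  have hsub : ∀ (A C : Matrix (Fin (2 ^ (2 * p))) (Fin (2 ^ (2 * p))) ℂ),
      (A - C) ⊗ₖ (1 : Matrix (Fin (2 ^ p)) (Fin (2 ^ p)) ℂ) = A ⊗ₖ 1 - C ⊗ₖ 1 := by
    intro A C
    ext ⟨i, i'⟩ ⟨j, j'⟩
    simp [Matrix.kroneckerMap_apply, sub_mul]
  have hsp3 : spectrum ℂ (Hqb ⊗ₖ (1 : Matrix (Fin (2 ^ p)) (Fin (2 ^ p)) ℂ))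
      = spectrum ℂ Hqb := by
    ext z
    rw [spectrum.mem_iff, spectrum.mem_iff]
    apply not_congr
    have key : (algebraMap ℂ (Matrix (Fin (2 ^ (2 * p)) × Fin (2 ^ p))
            (Fin (2 ^ (2 * p)) × Fin (2 ^ p)) ℂ) z
          - Hqb ⊗ₖ (1 : Matrix (Fin (2 ^ p)) (Fin (2 ^ p)) ℂ))
        = (algebraMap ℂ (Matrix (Fin (2 ^ (2 * p))) (Fin (2 ^ (2 * p))) ℂ) z - Hqb)
          ⊗ₖ (1 : Matrix (Fin (2 ^ p)) (Fin (2 ^ p)) ℂ) := by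
      rw [Algebra.algebraMap_eq_smul_one, Algebra.algebraMap_eq_smul_one, hsub,
        Matrix.smul_kronecker, Matrix.one_kronecker_one]
    rw [key, Matrix.isUnit_iff_isUnit_det, Matrix.isUnit_iff_isUnit_det,
      Matrix.det_kronecker, Matrix.det_one, one_pow, mul_one,
      isUnit_iff_ne_zero, isUnit_iff_ne_zero]
    exact pow_ne_zero_iff (by positivity)
  rw [hsp1, hsp2, hsp3]
end
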